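/- arXiv:2501.06673 — 3 statements merged into one kernel-verified Lean document; each statement's English description precedes it below -/
import Mathlib

section
/- Let C = A·B be an algebra factorisation in the category of H-modules, F a counital 2-cocycle on H, and V an (H,B)-module. Then the induced module Ind_{B_F}^{C_F}(V_F) is isomorphic as a C_F-module to the Giaquinto–Zhang twist (Ind_B^C(V))_F, and the two C_F-module structures on the underlying vector space A⊗V are intertwined by the map F⁻¹▷ : A⊗V → A⊗V. -/
open TensorProduct LinearMap

set_option maxHeartbeats 1000000
set_option synthInstance.maxHeartbeats 400000

noncomputable section

variable (k : Type) [Field k]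
variable (H : Type) [Ring H] [HopfAlgebra k H]

/-- `F`, with inverse `Finv`, is a counital 2-cocycle on the Hopf algebra `H`:
`(F⊗1)·(Δ⊗id)(F) = (1⊗F)·(id⊗Δ)(F)` and `(ε⊗id)(F) = 1 = (id⊗ε)(F)`. -/
def IsCocycle (F Finv : H ⊗[k] H) : Prop :=
  F * Finv = 1 ∧ Finv * F = 1 ∧
  (F ⊗ₜ[k] (1 : H)) * (TensorProduct.map Coalgebra.comul LinearMap.id F) =
    (TensorProduct.assoc k H H H).symm
      (((1 : H) ⊗ₜ[k] F) * (TensorProduct.map LinearMap.id Coalgebra.comul F)) ∧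
  TensorProduct.map Coalgebra.counit LinearMap.id F = 1 ∧
  TensorProduct.map LinearMap.id Coalgebra.counit F = 1

/-- A (left) module-algebra structure of a Hopf algebra `H` on an algebra `A`:
`A` is an algebra object in the category of `H`-modules. -/
structure ModuleAlgebra (A : Type) [Ring A] [Algebra k A] where
  act : H →ₗ[k] Module.End k A
  act_one : act 1 = 1
  act_mul : ∀ g h : H, act (g * h) = act g * act h
  act_algebra_unit : ∀ h : H, act h (1 : A) = (Coalgebra.counit h : k) • (1 : A)
  act_algebra_mul : ∀ (h : H) (a b : A),
    act h (a * b) = LinearMap.mul' k A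
      ((TensorProduct.homTensorHomMap (RingHom.id k) A A A A
        (TensorProduct.map act act (Coalgebra.comul h))) (a ⊗ₜ[k] b))

variable {k H}

/-- The operator on `A ⊗ B` obtained by letting an element `x ∈ H ⊗ H` act
legwise through the actions `actA`, `actB`. -/
def legAct {A B : Type} [AddCommGroup A] [Module k A] [AddCommGroup B] [Module k B]
    (actA : H →ₗ[k] Module.End k A) (actB : H →ₗ[k] Module.End k B) (x : H ⊗[k] H) :
    A ⊗[k] B →ₗ[k] A ⊗[k] B :=
  TensorProduct.homTensorHomMap (RingHom.id k) A B A B (TensorProduct.map actA actB x)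

/-- The twisted product `m_F = m ∘ (F⁻¹ ▷ −)` on `A`. -/
def twistedMul {A : Type} [Ring A] [Algebra k A] (ma : ModuleAlgebra k H A)
    (Finv : H ⊗[k] H) : A ⊗[k] A →ₗ[k] A :=
  LinearMap.mul' k A ∘ₗ legAct ma.act ma.act Finv

/-- The twisted coproduct `Δ_F(h) = F·Δ(h)·F⁻¹`. -/
def twistedComul (F Finv : H ⊗[k] H) : H →ₗ[k] H ⊗[k] H :=
  LinearMap.mulLeft k F ∘ₗ LinearMap.mulRight k Finv ∘ₗ Coalgebra.comul


/-- A representation of a `k`-algebra `A` on a `k`-vector space `V`. -/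
structure AlgRep (A : Type) [Ring A] [Algebra k A] (V : Type) [AddCommGroup V] [Module k V] where
  ρ : A →ₗ[k] Module.End k V
  ρ_one : ρ 1 = 1
  ρ_mul : ∀ a b : A, ρ (a * b) = ρ a * ρ b

/-- `V` is an `(H,A)`-module: the `A`-action is a morphism of `H`-modules, i.e.
`h ▷ (a ▷_A v) = (h₍₁₎ ▷ a) ▷_A (h₍₂₎ ▷ v)`. -/
def IsHAModule {A V : Type} [Ring A] [Algebra k A] [AddCommGroup V] [Module k V]
    (ma : ModuleAlgebra k H A) (ρA : AlgRep (k := k) A V) (ρH : AlgRep (k := k) H V) : Prop :=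
  ∀ (h : H) (a : A) (v : V),
    ρH.ρ h (ρA.ρ a v) =
      TensorProduct.lift ρA.ρ (legAct ma.act ρH.ρ (Coalgebra.comul h) (a ⊗ₜ[k] v))

/-- The Giaquinto–Zhang twisted action `▷_F = ▷_A ∘ (F⁻¹ ▷ −)` of `A_F` on `V`. -/
def twistedAct {A V : Type} [Ring A] [Algebra k A] [AddCommGroup V] [Module k V]
    (ma : ModuleAlgebra k H A) (ρA : AlgRep (k := k) A V) (ρH : AlgRep (k := k) H V)
    (Finv : H ⊗[k] H) : A →ₗ[k] Module.End k V :=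
  TensorProduct.curry (TensorProduct.lift ρA.ρ ∘ₗ legAct ma.act ρH.ρ Finv)

/-- Generic smash-product multiplication on `A ⊗ H`, for a multiplication `μA` on `A`,
comultiplication `δ` and multiplication `μH` on `H`, and action `actUn : H ⊗ A → A`:
`(a # h)(b # g) = a·(h₍₁₎ ▷ b) # h₍₂₎·g`. -/
def smashMulMap {A : Type} [AddCommGroup A] [Module k A]
    (μA : A ⊗[k] A →ₗ[k] A) (δ : H →ₗ[k] H ⊗[k] H) (μH : H ⊗[k] H →ₗ[k] H)
    (actUn : H ⊗[k] A →ₗ[k] A) :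
    (A ⊗[k] H) ⊗[k] (A ⊗[k] H) →ₗ[k] A ⊗[k] H :=
  TensorProduct.map μA LinearMap.id
    ∘ₗ (TensorProduct.assoc k A A H).symm.toLinearMap
    ∘ₗ (TensorProduct.map LinearMap.id
          ((TensorProduct.map actUn μH)
            ∘ₗ (TensorProduct.tensorTensorTensorComm k H H A H).toLinearMap))
    ∘ₗ (TensorProduct.assoc k A (H ⊗[k] H) (A ⊗[k] H)).toLinearMap
    ∘ₗ TensorProduct.map (TensorProduct.map LinearMap.id δ) LinearMap.id

/-- The adjoint (strongly inner) action `h ▷ a = u(h₍₁₎)·a·u(S(h₍₂₎))` of `H` on `A`,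
along an algebra homomorphism `u : H → A`. -/
def adjointAction {A : Type} [Ring A] [Algebra k A] (u : H →ₐ[k] A) :
    H →ₗ[k] Module.End k A :=
  LinearMap.mul' k (Module.End k A)
    ∘ₗ TensorProduct.map (LinearMap.mul k A ∘ₗ u.toLinearMap)
        ((LinearMap.mul k A).flip ∘ₗ u.toLinearMap ∘ₗ HopfAlgebra.antipode (R := k))
    ∘ₗ Coalgebra.comul

/-- The Kulish–Mudrov map `η : A_F → A`, `a ↦ (f' ▷ a)·u(f'')` with `F⁻¹ = f' ⊗ f''`. -/
def kulishMudrovEta {A : Type} [Ring A] [Algebra k A] (ma : ModuleAlgebra k H A)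
    (u : H →ₐ[k] A) (Finv : H ⊗[k] H) : A →ₗ[k] A :=
  LinearMap.mul' k A
    ∘ₗ TensorProduct.map (TensorProduct.lift ma.act) u.toLinearMap
    ∘ₗ (TensorProduct.assoc k H A H).symm.toLinearMap
    ∘ₗ TensorProduct.map LinearMap.id (TensorProduct.comm k H A).toLinearMap
    ∘ₗ (TensorProduct.assoc k H H A).toLinearMap
    ∘ₗ TensorProduct.mk k (H ⊗[k] H) A Finv

/-- The multiplication map of `C` restricted to `A ⊗ B` along the inclusions. -/
def resMul {C A B : Type} [Ring C] [Algebra k C] [AddCommGroup A] [Module k A]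
    [AddCommGroup B] [Module k B] (ιA : A →ₗ[k] C) (ιB : B →ₗ[k] C) :
    A ⊗[k] B →ₗ[k] C :=
  LinearMap.mul' k C ∘ₗ TensorProduct.map ιA ιB

/-- The action of `C = A·B` on the induced module `Ind_B^C(V) ≅ A ⊗ V`, built from the
inverse `μinv` of the factorisation isomorphism, the generalised braiding `Ψ`, the
multiplication `μA` of `A` and the `B`-action on `V`. -/
def inducedAction {C A B V : Type} [AddCommGroup C] [Module k C] [AddCommGroup A]
    [Module k A] [AddCommGroup B] [Module k B] [AddCommGroup V] [Module k V]
    (μinv : C →ₗ[k] A ⊗[k] B) (Ψm : B ⊗[k] A →ₗ[k] A ⊗[k] B)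
    (μA : A ⊗[k] A →ₗ[k] A) (actBV : B ⊗[k] V →ₗ[k] V) :
    C ⊗[k] (A ⊗[k] V) →ₗ[k] A ⊗[k] V :=
  TensorProduct.map μA actBV
    ∘ₗ (TensorProduct.assoc k A A (B ⊗[k] V)).symm.toLinearMap
    ∘ₗ TensorProduct.map LinearMap.id
         ((TensorProduct.assoc k A B V).toLinearMap
           ∘ₗ TensorProduct.map Ψm LinearMap.id
           ∘ₗ (TensorProduct.assoc k B A V).symm.toLinearMap)
    ∘ₗ (TensorProduct.assoc k A B (A ⊗[k] V)).toLinearMap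
    ∘ₗ TensorProduct.map μinv LinearMap.id

/-- The diagonal action of `H` on a tensor product of two `H`-modules. -/
def diagAct {A V : Type} [AddCommGroup A] [Module k A] [AddCommGroup V] [Module k V]
    (actA : H →ₗ[k] Module.End k A) (actV : H →ₗ[k] Module.End k V) :
    H →ₗ[k] Module.End k (A ⊗[k] V) :=
  TensorProduct.homTensorHomMap (RingHom.id k) A V A V ∘ₗ TensorProduct.map actA actV ∘ₗ Coalgebra.comul

/-! ### Auxiliary infrastructure -/

section gleg
variable {R S M N : Type} [Ring R] [Algebra k R] [Ring S] [Algebra k S]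
  [AddCommGroup M] [Module k M] [AddCommGroup N] [Module k N]

/-- Leg-wise action of `R ⊗ S` on `M ⊗ N`, as a linear map into endomorphisms. -/
def gleg (aM : R →ₗ[k] Module.End k M) (aN : S →ₗ[k] Module.End k N) :
    R ⊗[k] S →ₗ[k] Module.End k (M ⊗[k] N) :=
  TensorProduct.homTensorHomMap (RingHom.id k) M N M N ∘ₗ TensorProduct.map aM aN

lemma gleg_tmul (aM : R →ₗ[k] Module.End k M) (aN : S →ₗ[k] Module.End k N) (g : R) (h : S) :
    gleg aM aN (g ⊗ₜ[k] h) = TensorProduct.map (aM g) (aN h) := by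
  simp [gleg]

lemma gleg_mul (aM : R →ₗ[k] Module.End k M) (aN : S →ₗ[k] Module.End k N)
    (hM : ∀ g h : R, aM (g * h) = aM g * aM h) (hN : ∀ g h : S, aN (g * h) = aN g * aN h)
    (x y : R ⊗[k] S) : gleg aM aN (x * y) = gleg aM aN x * gleg aM aN y := by
  induction x using TensorProduct.induction_on with
  | zero => simp
  | add u v hu hv => simp [add_mul, hu, hv]
  | tmul g h =>
    induction y using TensorProduct.induction_on with
    | zero => simp
    | add u v hu hv => simp [mul_add, hu, hv]
    | tmul g' h' =>
      simp only [Algebra.TensorProduct.tmul_mul_tmul, gleg_tmul, hM, hN]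
      ext m n
      simp [TensorProduct.map_tmul, Module.End.mul_apply]

lemma gleg_one (aM : R →ₗ[k] Module.End k M) (aN : S →ₗ[k] Module.End k N)
    (hM : aM 1 = 1) (hN : aN 1 = 1) : gleg aM aN 1 = 1 := by
  rw [Algebra.TensorProduct.one_def, gleg_tmul, hM, hN]
  ext m n
  simp

end gleg

lemma legAct_eq_gleg {A B : Type} [AddCommGroup A] [Module k A] [AddCommGroup B] [Module k B]
    (actA : H →ₗ[k] Module.End k A) (actB : H →ₗ[k] Module.End k B) (x : H ⊗[k] H) :
    legAct actA actB x = gleg actA actB x := rfl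

lemma diagAct_eq_gleg {A V : Type} [AddCommGroup A] [Module k A] [AddCommGroup V] [Module k V]
    (actA : H →ₗ[k] Module.End k A) (actV : H →ₗ[k] Module.End k V) (h : H) :
    diagAct actA actV h = gleg actA actV (Coalgebra.comul h) := rfl

lemma twistedMul_eq_gleg {A : Type} [Ring A] [Algebra k A] (ma : ModuleAlgebra k H A)
    (Finv : H ⊗[k] H) (z : A ⊗[k] A) :
    twistedMul ma Finv z = LinearMap.mul' k A (gleg ma.act ma.act Finv z) := rfl

section hopfelts

lemma mapComulId_mul (x y : H ⊗[k] H) :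
    TensorProduct.map (Coalgebra.comul (R := k)) LinearMap.id (x * y) =
      TensorProduct.map Coalgebra.comul LinearMap.id x *
        TensorProduct.map Coalgebra.comul LinearMap.id y := by
  have h : (TensorProduct.map (Coalgebra.comul (R := k) (A := H)) (LinearMap.id (M := H))) =
      (Algebra.TensorProduct.map (Bialgebra.comulAlgHom k H) (AlgHom.id k H)).toLinearMap := by
    apply TensorProduct.ext'
    intro a b
    simp [Bialgebra.comulAlgHom]
  rw [h]
  simp only [AlgHom.toLinearMap_apply]
  exact map_mul _ x y

lemma mapIdComul_mul (x y : H ⊗[k] H) :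
    TensorProduct.map LinearMap.id (Coalgebra.comul (R := k)) (x * y) =
      TensorProduct.map LinearMap.id Coalgebra.comul x *
        TensorProduct.map LinearMap.id Coalgebra.comul y := by
  have h : (TensorProduct.map (LinearMap.id (M := H)) (Coalgebra.comul (R := k) (A := H))) =
      (Algebra.TensorProduct.map (AlgHom.id k H) (Bialgebra.comulAlgHom k H)).toLinearMap := by
    apply TensorProduct.ext'
    intro a b
    simp [Bialgebra.comulAlgHom]
  rw [h]
  simp only [AlgHom.toLinearMap_apply]
  exact map_mul _ x y

lemma assoc_symm_mul (u v : H ⊗[k] (H ⊗[k] H)) :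
    (TensorProduct.assoc k H H H).symm (u * v) =
      (TensorProduct.assoc k H H H).symm u * (TensorProduct.assoc k H H H).symm v := by
  have h : ((TensorProduct.assoc k H H H).symm : H ⊗[k] (H ⊗[k] H) → (H ⊗[k] H) ⊗[k] H) =
      (Algebra.TensorProduct.assoc k k k H H H).symm := by
    rfl
  rw [h]
  exact map_mul _ u v

lemma mapComulId_one : TensorProduct.map (Coalgebra.comul (R := k) (A := H)) LinearMap.id
    (1 : H ⊗[k] H) = 1 := by
  rw [Algebra.TensorProduct.one_def, TensorProduct.map_tmul]
  simp [Bialgebra.comul_one, Algebra.TensorProduct.one_def]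

lemma mapIdComul_one : TensorProduct.map LinearMap.id (Coalgebra.comul (R := k) (A := H))
    (1 : H ⊗[k] H) = 1 := by
  rw [Algebra.TensorProduct.one_def, TensorProduct.map_tmul]
  simp [Bialgebra.comul_one, Algebra.TensorProduct.one_def]

lemma assoc_symm_one :
    (TensorProduct.assoc k H H H).symm (1 : H ⊗[k] (H ⊗[k] H)) = 1 := by
  have h1 : (1 : H ⊗[k] (H ⊗[k] H)) = (1 : H) ⊗ₜ[k] ((1 : H) ⊗ₜ[k] (1 : H)) := rfl
  rw [h1, TensorProduct.assoc_symm_tmul]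
  rfl

/-- Inversion of the 2-cocycle identity. -/
lemma cocycle_inv {F Finv : H ⊗[k] H} (hF : IsCocycle k H F Finv) :
    (TensorProduct.map Coalgebra.comul LinearMap.id Finv) * (Finv ⊗ₜ[k] (1 : H)) =
      (TensorProduct.assoc k H H H).symm
        ((TensorProduct.map LinearMap.id Coalgebra.comul Finv) * ((1 : H) ⊗ₜ[k] Finv)) := by
  obtain ⟨h1, h2, h3, -, -⟩ := hF
  set X : (H ⊗[k] H) ⊗[k] H := (F ⊗ₜ[k] (1 : H)) *
    (TensorProduct.map Coalgebra.comul LinearMap.id F) with hX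
  set X' : (H ⊗[k] H) ⊗[k] H := (TensorProduct.map Coalgebra.comul LinearMap.id Finv) *
    (Finv ⊗ₜ[k] (1 : H)) with hX'
  set Y : H ⊗[k] (H ⊗[k] H) := ((1 : H) ⊗ₜ[k] F) *
    (TensorProduct.map LinearMap.id Coalgebra.comul F) with hY
  set Y' : H ⊗[k] (H ⊗[k] H) := (TensorProduct.map LinearMap.id Coalgebra.comul Finv) *
    ((1 : H) ⊗ₜ[k] Finv) with hY'
  have hXX' : X * X' = 1 := by
    rw [hX, hX']
    rw [mul_assoc, ← mul_assoc (TensorProduct.map Coalgebra.comul LinearMap.id F)]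
    rw [← mapComulId_mul, h1, mapComulId_one, one_mul,
      Algebra.TensorProduct.tmul_mul_tmul, h1, one_mul]
    rw [← Algebra.TensorProduct.one_def]
  have hY'Y : Y' * Y = 1 := by
    rw [hY, hY']
    rw [mul_assoc, ← mul_assoc ((1 : H) ⊗ₜ[k] Finv)]
    rw [Algebra.TensorProduct.tmul_mul_tmul, one_mul, h2, ← Algebra.TensorProduct.one_def,
      one_mul, ← mapIdComul_mul, h2, mapIdComul_one]
  have hZX : ((TensorProduct.assoc k H H H).symm Y') * X = 1 := by
    rw [h3, ← assoc_symm_mul, hY'Y, assoc_symm_one]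
  calc X' = 1 * X' := (one_mul X').symm
    _ = (((TensorProduct.assoc k H H H).symm Y') * X) * X' := by rw [hZX]
    _ = ((TensorProduct.assoc k H H H).symm Y') * (X * X') := by rw [mul_assoc]
    _ = (TensorProduct.assoc k H H H).symm Y' := by rw [hXX', mul_one]

end hopfelts

section keysec
variable {C A B V : Type} [AddCommGroup C] [Module k C] [AddCommGroup A] [Module k A]
  [AddCommGroup B] [Module k B] [AddCommGroup V] [Module k V]

/-- The map `(a ⊗ b) ⊗ v ↦ a ⊗ ρ'(b ⊗ v)`. -/
def Pgen (ρ' : B ⊗[k] V →ₗ[k] V) : (A ⊗[k] B) ⊗[k] V →ₗ[k] A ⊗[k] V :=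
  TensorProduct.map LinearMap.id ρ' ∘ₗ (TensorProduct.assoc k A B V).toLinearMap

lemma Pgen_tmul (ρ' : B ⊗[k] V →ₗ[k] V) (a : A) (b : B) (v : V) :
    Pgen ρ' ((a ⊗ₜ[k] b) ⊗ₜ[k] v) = a ⊗ₜ[k] ρ' (b ⊗ₜ[k] v) := by
  simp [Pgen]

lemma S1 (mA : A ⊗[k] A →ₗ[k] A) (ρ' : B ⊗[k] V →ₗ[k] V) (a₀ : A) (v : V) (z : A ⊗[k] B) :
    TensorProduct.map mA ρ' ((TensorProduct.assoc k A A (B ⊗[k] V)).symm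
        (a₀ ⊗ₜ[k] (TensorProduct.assoc k A B V (z ⊗ₜ[k] v)))) =
      Pgen ρ' ((TensorProduct.map (mA ∘ₗ TensorProduct.mk k A A a₀) LinearMap.id z) ⊗ₜ[k] v) := by
  induction z using TensorProduct.induction_on with
  | zero => simp
  | add u w hu hw => simp only [add_tmul, map_add, tmul_add] at hu hw ⊢; rw [hu, hw]
  | tmul a' b' => simp [Pgen_tmul]

lemma S2a (mC : C ⊗[k] C →ₗ[k] C) (mA : A ⊗[k] A →ₗ[k] A) (iA : A →ₗ[k] C) (iB : B →ₗ[k] C)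
    (h1 : ∀ x y z : C, mC (mC (x ⊗ₜ[k] y) ⊗ₜ[k] z) = mC (x ⊗ₜ[k] mC (y ⊗ₜ[k] z)))
    (h2 : ∀ a a' : A, mC (iA a ⊗ₜ[k] iA a') = iA (mA (a ⊗ₜ[k] a')))
    (a₀ : A) (z : A ⊗[k] B) :
    (mC ∘ₗ TensorProduct.map iA iB) (TensorProduct.map (mA ∘ₗ TensorProduct.mk k A A a₀)
        LinearMap.id z) =
      mC (iA a₀ ⊗ₜ[k] (mC ∘ₗ TensorProduct.map iA iB) z) := by
  induction z using TensorProduct.induction_on with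
  | zero => simp
  | add u w hu hw => simp only [map_add, tmul_add] at hu hw ⊢; rw [hu, hw]
  | tmul a' b' =>
    simp only [comp_apply, map_tmul, mk_apply, id_coe, id_eq]
    rw [← h2, h1]

/-- Key computation: the induced action of `c` on `a ⊗ v` is `μ⁻¹(c · ιA(a))` acted on `v`. -/
lemma key_induced (mC : C ⊗[k] C →ₗ[k] C) (mA : A ⊗[k] A →ₗ[k] A)
    (iA : A →ₗ[k] C) (iB : B →ₗ[k] C) (ρ' : B ⊗[k] V →ₗ[k] V)
    (μ : A ⊗[k] B →ₗ[k] C) (μ' : B ⊗[k] A →ₗ[k] C)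
    (hμ : μ = mC ∘ₗ TensorProduct.map iA iB) (hμ' : μ' = mC ∘ₗ TensorProduct.map iB iA)
    (hbij : Function.Bijective μ)
    (h1 : ∀ x y z : C, mC (mC (x ⊗ₜ[k] y) ⊗ₜ[k] z) = mC (x ⊗ₜ[k] mC (y ⊗ₜ[k] z)))
    (h2 : ∀ a a' : A, mC (iA a ⊗ₜ[k] iA a') = iA (mA (a ⊗ₜ[k] a')))
    (c : C) (a : A) (v : V) :
    inducedAction (LinearEquiv.ofBijective μ hbij).symm.toLinearMap
        ((LinearEquiv.ofBijective μ hbij).symm.toLinearMap ∘ₗ μ')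
        mA ρ' (c ⊗ₜ[k] (a ⊗ₜ[k] v)) =
      Pgen ρ' ((LinearEquiv.ofBijective μ hbij).symm (mC (c ⊗ₜ[k] iA a)) ⊗ₜ[k] v) := by
  subst hμ hμ'
  set e := LinearEquiv.ofBijective (mC ∘ₗ TensorProduct.map iA iB) hbij with he
  have hc : c = e (e.symm c) := (e.apply_symm_apply c).symm
  rw [hc]
  generalize e.symm c = y
  induction y using TensorProduct.induction_on with
  | zero => simp
  | add u w hu hw =>
    simp only [map_add, add_tmul] at hu hw ⊢
    rw [hu, hw]
  | tmul a₀ b₀ =>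
    have hea : ∀ z : A ⊗[k] B, e z = (mC ∘ₗ TensorProduct.map iA iB) z := fun z => rfl
    have lhs_eq : inducedAction e.symm.toLinearMap
        (e.symm.toLinearMap ∘ₗ (mC ∘ₗ TensorProduct.map iB iA)) mA ρ'
        ((e (a₀ ⊗ₜ[k] b₀)) ⊗ₜ[k] (a ⊗ₜ[k] v)) =
        TensorProduct.map mA ρ' ((TensorProduct.assoc k A A (B ⊗[k] V)).symm
          (a₀ ⊗ₜ[k] (TensorProduct.assoc k A B V
            ((e.symm (mC (iB b₀ ⊗ₜ[k] iA a))) ⊗ₜ[k] v)))) := by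
      simp only [inducedAction, comp_apply, map_tmul, LinearEquiv.coe_coe,
        LinearEquiv.symm_apply_apply, assoc_tmul, assoc_symm_tmul, id_coe, id_eq]
    rw [lhs_eq, S1]
    congr 1
    have hS2 : e.symm (mC (e (a₀ ⊗ₜ[k] b₀) ⊗ₜ[k] iA a)) =
        TensorProduct.map (mA ∘ₗ TensorProduct.mk k A A a₀) LinearMap.id
          (e.symm (mC (iB b₀ ⊗ₜ[k] iA a))) := by
      apply e.injective
      rw [e.apply_symm_apply]
      rw [hea (TensorProduct.map (mA ∘ₗ TensorProduct.mk k A A a₀) LinearMap.id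
        (e.symm (mC (iB b₀ ⊗ₜ[k] iA a))))]
      rw [S2a mC mA iA iB h1 h2]
      rw [← hea, e.apply_symm_apply]
      rw [hea (a₀ ⊗ₜ[k] b₀)]
      simp only [comp_apply, map_tmul]
      rw [h1]
    rw [hS2]

end keysec

section ctx
variable {C A B : Type} [Ring C] [Algebra k C] [Ring A] [Algebra k A] [Ring B] [Algebra k B]

lemma bridge (maC : ModuleAlgebra k H C) (maA : ModuleAlgebra k H A) (maB : ModuleAlgebra k H B)
    (ιA : A →ₐ[k] C) (ιB : B →ₐ[k] C)
    (hAeq : ∀ (h : H) (a : A), ιA (maA.act h a) = maC.act h (ιA a))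
    (hBeq : ∀ (h : H) (b : B), ιB (maB.act h b) = maC.act h (ιB b))
    (w : H ⊗[k] H) (z : A ⊗[k] B) :
    resMul ιA.toLinearMap ιB.toLinearMap (gleg maA.act maB.act w z) =
      LinearMap.mul' k C (gleg maC.act maC.act w
        (TensorProduct.map ιA.toLinearMap ιB.toLinearMap z)) := by
  induction w using TensorProduct.induction_on with
  | zero => simp
  | add u v hu hv => simp only [map_add, LinearMap.add_apply] at hu hv ⊢; rw [hu, hv]
  | tmul g h =>
    induction z using TensorProduct.induction_on with
    | zero => simp
    | add u v hu hv => simp only [map_add, LinearMap.map_add] at hu hv ⊢; rw [hu, hv]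
    | tmul a b =>
      simp only [gleg_tmul, map_tmul, resMul, comp_apply, LinearMap.mul'_apply,
        AlgHom.toLinearMap_apply, hAeq, hBeq]

lemma iotaA_twisted (maC : ModuleAlgebra k H C) (maA : ModuleAlgebra k H A)
    (ιA : A →ₐ[k] C)
    (hAeq : ∀ (h : H) (a : A), ιA (maA.act h a) = maC.act h (ιA a))
    (w : H ⊗[k] H) (a a' : A) :
    LinearMap.mul' k C (gleg maC.act maC.act w (ιA a ⊗ₜ[k] ιA a')) =
      ιA (LinearMap.mul' k A (gleg maA.act maA.act w (a ⊗ₜ[k] a'))) := by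
  induction w using TensorProduct.induction_on with
  | zero => simp
  | add u v hu hv => simp only [map_add, LinearMap.add_apply] at hu hv ⊢; rw [hu, hv]
  | tmul g h =>
    simp only [gleg_tmul, map_tmul, LinearMap.mul'_apply, ← hAeq, ← map_mul]

lemma act_mul'_comul (maC : ModuleAlgebra k H C) (h : H) (u : C ⊗[k] C) :
    LinearMap.mul' k C (gleg maC.act maC.act (Coalgebra.comul h) u) =
      maC.act h (LinearMap.mul' k C u) := by
  induction u using TensorProduct.induction_on with
  | zero => simp
  | add u v hu hv => simp only [map_add] at hu hv ⊢; rw [hu, hv]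
  | tmul x y =>
    rw [show gleg maC.act maC.act (Coalgebra.comul h) (x ⊗ₜ[k] y) =
      (TensorProduct.homTensorHomMap (RingHom.id k) C C C C
        (TensorProduct.map maC.act maC.act (Coalgebra.comul h))) (x ⊗ₜ[k] y) from rfl]
    rw [LinearMap.mul'_apply, maC.act_algebra_mul]

lemma mu_equiv (maC : ModuleAlgebra k H C) (maA : ModuleAlgebra k H A)
    (maB : ModuleAlgebra k H B) (ιA : A →ₐ[k] C) (ιB : B →ₐ[k] C)
    (hAeq : ∀ (h : H) (a : A), ιA (maA.act h a) = maC.act h (ιA a))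
    (hBeq : ∀ (h : H) (b : B), ιB (maB.act h b) = maC.act h (ιB b))
    (h : H) (z : A ⊗[k] B) :
    maC.act h (resMul ιA.toLinearMap ιB.toLinearMap z) =
      resMul ιA.toLinearMap ιB.toLinearMap (gleg maA.act maB.act (Coalgebra.comul h) z) := by
  rw [bridge maC maA maB ιA ιB hAeq hBeq, act_mul'_comul]
  rfl

end ctx

section tassoc
variable {C : Type} [Ring C] [Algebra k C]

/-- The trilinear evaluation `(h ⊗ g) ⊗ g' ↦ ((h▷x)(g▷y))(g'▷z)`. -/
def GammaL (maC : ModuleAlgebra k H C) (x y z : C) : (H ⊗[k] H) ⊗[k] H →ₗ[k] C :=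
  LinearMap.mul' k C ∘ₗ TensorProduct.map
    (LinearMap.mul' k C ∘ₗ TensorProduct.map (maC.act.flip x) (maC.act.flip y))
    (maC.act.flip z)

/-- The trilinear evaluation `h ⊗ (g ⊗ g') ↦ (h▷x)((g▷y)(g'▷z))`. -/
def GammaR (maC : ModuleAlgebra k H C) (x y z : C) : H ⊗[k] (H ⊗[k] H) →ₗ[k] C :=
  LinearMap.mul' k C ∘ₗ TensorProduct.map (maC.act.flip x)
    (LinearMap.mul' k C ∘ₗ TensorProduct.map (maC.act.flip y) (maC.act.flip z))

lemma IC2 (maC : ModuleAlgebra k H C) (x y : C) (W D : H ⊗[k] H) :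
    LinearMap.mul' k C (gleg maC.act maC.act W (gleg maC.act maC.act D (x ⊗ₜ[k] y))) =
      (LinearMap.mul' k C ∘ₗ TensorProduct.map (maC.act.flip x) (maC.act.flip y)) (W * D) := by
  induction W using TensorProduct.induction_on with
  | zero => simp
  | add u v hu hv => simp only [map_add, LinearMap.add_apply, add_mul] at hu hv ⊢; rw [hu, hv]
  | tmul h g =>
    induction D using TensorProduct.induction_on with
    | zero => simp
    | add u v hu hv =>
      simp only [map_add, LinearMap.add_apply, mul_add] at hu hv ⊢; rw [hu, hv]
    | tmul f f' =>
      simp only [gleg_tmul, map_tmul, Algebra.TensorProduct.tmul_mul_tmul, comp_apply,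
        LinearMap.mul'_apply, LinearMap.flip_apply, maC.act_mul, Module.End.mul_apply]

lemma GammaLR (maC : ModuleAlgebra k H C) (x y z : C) (W : (H ⊗[k] H) ⊗[k] H) :
    GammaR maC x y z (TensorProduct.assoc k H H H W) = GammaL maC x y z W := by
  have : GammaR maC x y z ∘ₗ (TensorProduct.assoc k H H H).toLinearMap = GammaL maC x y z := by
    apply TensorProduct.ext_threefold
    intro h g g'
    simp [GammaL, GammaR, mul_assoc]
  calc GammaR maC x y z (TensorProduct.assoc k H H H W)
      = (GammaR maC x y z ∘ₗ (TensorProduct.assoc k H H H).toLinearMap) W := rfl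
    _ = GammaL maC x y z W := by rw [this]

lemma LemA (maC : ModuleAlgebra k H C) (x y z : C) (D₂ D₁ : H ⊗[k] H) :
    LinearMap.mul' k C (gleg maC.act maC.act D₂
        ((LinearMap.mul' k C (gleg maC.act maC.act D₁ (x ⊗ₜ[k] y))) ⊗ₜ[k] z)) =
      GammaL maC x y z ((TensorProduct.map Coalgebra.comul LinearMap.id D₂) *
        (D₁ ⊗ₜ[k] (1 : H))) := by
  induction D₂ using TensorProduct.induction_on with
  | zero => simp
  | add u v hu hv =>
    simp only [map_add, LinearMap.add_apply, add_mul] at hu hv ⊢; rw [hu, hv]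
  | tmul g' g'' =>
    have step1 : LinearMap.mul' k C (gleg maC.act maC.act (g' ⊗ₜ[k] g'')
        ((LinearMap.mul' k C (gleg maC.act maC.act D₁ (x ⊗ₜ[k] y))) ⊗ₜ[k] z)) =
        maC.act g' (LinearMap.mul' k C (gleg maC.act maC.act D₁ (x ⊗ₜ[k] y))) *
          maC.act g'' z := by
      simp [gleg_tmul]
    rw [step1, ← act_mul'_comul, IC2]
    have step2 : (TensorProduct.map Coalgebra.comul LinearMap.id (g' ⊗ₜ[k] g'')) *
        (D₁ ⊗ₜ[k] (1 : H)) = ((Coalgebra.comul g') * D₁) ⊗ₜ[k] g'' := by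
      simp only [map_tmul, id_coe, id_eq, Algebra.TensorProduct.tmul_mul_tmul, mul_one]
    rw [step2]
    simp only [GammaL, comp_apply, map_tmul, LinearMap.mul'_apply, LinearMap.flip_apply]

lemma LemB (maC : ModuleAlgebra k H C) (x y z : C) (D₂ D₁ : H ⊗[k] H) :
    LinearMap.mul' k C (gleg maC.act maC.act D₂
        (x ⊗ₜ[k] (LinearMap.mul' k C (gleg maC.act maC.act D₁ (y ⊗ₜ[k] z))))) =
      GammaR maC x y z ((TensorProduct.map LinearMap.id Coalgebra.comul D₂) *
        ((1 : H) ⊗ₜ[k] D₁)) := by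
  induction D₂ using TensorProduct.induction_on with
  | zero => simp
  | add u v hu hv =>
    simp only [map_add, LinearMap.add_apply, add_mul] at hu hv ⊢; rw [hu, hv]
  | tmul g' g'' =>
    have step1 : LinearMap.mul' k C (gleg maC.act maC.act (g' ⊗ₜ[k] g'')
        (x ⊗ₜ[k] (LinearMap.mul' k C (gleg maC.act maC.act D₁ (y ⊗ₜ[k] z))))) =
        maC.act g' x *
          maC.act g'' (LinearMap.mul' k C (gleg maC.act maC.act D₁ (y ⊗ₜ[k] z))) := by
      simp [gleg_tmul]
    rw [step1, ← act_mul'_comul, IC2]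
    have step2 : (TensorProduct.map LinearMap.id Coalgebra.comul (g' ⊗ₜ[k] g'')) *
        ((1 : H) ⊗ₜ[k] D₁) = g' ⊗ₜ[k] ((Coalgebra.comul g'') * D₁) := by
      simp only [map_tmul, id_coe, id_eq, Algebra.TensorProduct.tmul_mul_tmul, mul_one]
    rw [step2]
    simp only [GammaR, comp_apply, map_tmul, LinearMap.mul'_apply, LinearMap.flip_apply]

/-- Associativity of the twisted multiplication, from the 2-cocycle identity. -/
lemma twisted_assoc (maC : ModuleAlgebra k H C) {F Finv : H ⊗[k] H}
    (hF : IsCocycle k H F Finv) (x y z : C) :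
    twistedMul maC Finv (twistedMul maC Finv (x ⊗ₜ[k] y) ⊗ₜ[k] z) =
      twistedMul maC Finv (x ⊗ₜ[k] twistedMul maC Finv (y ⊗ₜ[k] z)) := by
  rw [twistedMul_eq_gleg, twistedMul_eq_gleg, twistedMul_eq_gleg, twistedMul_eq_gleg]
  rw [LemA, LemB, cocycle_inv hF, ← GammaLR, LinearEquiv.apply_symm_apply]

end tassoc

/-- For an algebra factorisation `C = A·B` in `H`-modules and an `(H,B)`-module `V`,
the induced module `Ind_{B_F}^{C_F}(V_F)` is isomorphic, as a `C_F`-module, to the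
Giaquinto–Zhang twist `(Ind_B^C(V))_F`: the two `C_F`-actions on `A ⊗ V` are
intertwined by the bijective map `F⁻¹ ▷ : A ⊗ V → A ⊗ V`. -/
theorem twist_of_induced_module {C A B V : Type} [Ring C] [Algebra k C] [Ring A]
    [Algebra k A] [Ring B] [Algebra k B] [AddCommGroup V] [Module k V]
    (maC : ModuleAlgebra k H C) (maA : ModuleAlgebra k H A) (maB : ModuleAlgebra k H B)
    (ιA : A →ₐ[k] C) (ιB : B →ₐ[k] C)
    (hAeq : ∀ (h : H) (a : A), ιA (maA.act h a) = maC.act h (ιA a))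
    (hBeq : ∀ (h : H) (b : B), ιB (maB.act h b) = maC.act h (ιB b))
    (ρB : AlgRep (k := k) B V) (ρHV : AlgRep (k := k) H V)
    (hHB : IsHAModule maB ρB ρHV)
    (F Finv : H ⊗[k] H) (hF : IsCocycle k H F Finv)
    (hbij : Function.Bijective (resMul ιA.toLinearMap ιB.toLinearMap))
    (hbijF : Function.Bijective (twistedMul maC Finv ∘ₗ
      TensorProduct.map ιA.toLinearMap ιB.toLinearMap)) :
    Function.Bijective (legAct maA.act ρHV.ρ Finv : A ⊗[k] V →ₗ[k] A ⊗[k] V) ∧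
    ∀ (c : C) (x : A ⊗[k] V),
      legAct maA.act ρHV.ρ Finv
          (inducedAction
            (LinearEquiv.ofBijective
              (twistedMul maC Finv ∘ₗ TensorProduct.map ιA.toLinearMap ιB.toLinearMap)
              hbijF).symm.toLinearMap
            ((LinearEquiv.ofBijective
                (twistedMul maC Finv ∘ₗ TensorProduct.map ιA.toLinearMap ιB.toLinearMap)
                hbijF).symm.toLinearMap
              ∘ₗ (twistedMul maC Finv ∘ₗ TensorProduct.map ιB.toLinearMap ιA.toLinearMap))
            (twistedMul maA Finv)
            (TensorProduct.lift ρB.ρ ∘ₗ legAct maB.act ρHV.ρ Finv)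
            (c ⊗ₜ[k] x)) =
        inducedAction
          (LinearEquiv.ofBijective (resMul ιA.toLinearMap ιB.toLinearMap)
            hbij).symm.toLinearMap
          ((LinearEquiv.ofBijective (resMul ιA.toLinearMap ιB.toLinearMap)
              hbij).symm.toLinearMap ∘ₗ resMul ιB.toLinearMap ιA.toLinearMap)
          (LinearMap.mul' k A) (TensorProduct.lift ρB.ρ)
          (legAct maC.act (diagAct maA.act ρHV.ρ) Finv
            (c ⊗ₜ[k] legAct maA.act ρHV.ρ Finv x)) := by
  -- abbreviations
  have ΦABmul : ∀ X Y : H ⊗[k] H, gleg maA.act maB.act (X * Y) =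
      gleg maA.act maB.act X * gleg maA.act maB.act Y :=
    gleg_mul _ _ maA.act_mul maB.act_mul
  have ΦABone : gleg maA.act maB.act (1 : H ⊗[k] H) = 1 := gleg_one _ _ maA.act_one maB.act_one
  have ΦAVmul : ∀ X Y : H ⊗[k] H, gleg maA.act ρHV.ρ (X * Y) =
      gleg maA.act ρHV.ρ X * gleg maA.act ρHV.ρ Y :=
    gleg_mul _ _ maA.act_mul ρHV.ρ_mul
  have ΦAVone : gleg maA.act ρHV.ρ (1 : H ⊗[k] H) = 1 := gleg_one _ _ maA.act_one ρHV.ρ_one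
  have ΦCAmul : ∀ X Y : H ⊗[k] H, gleg maC.act maA.act (X * Y) =
      gleg maC.act maA.act X * gleg maC.act maA.act Y :=
    gleg_mul _ _ maC.act_mul maA.act_mul
  have G3mul : ∀ X Y : (H ⊗[k] H) ⊗[k] H, gleg (gleg maA.act maB.act) ρHV.ρ (X * Y) =
      gleg (gleg maA.act maB.act) ρHV.ρ X * gleg (gleg maA.act maB.act) ρHV.ρ Y :=
    gleg_mul _ _ ΦABmul ρHV.ρ_mul
  have hbijL : Function.Bijective (legAct maA.act ρHV.ρ Finv : A ⊗[k] V →ₗ[k] A ⊗[k] V) := by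
    rw [legAct_eq_gleg]
    apply Function.bijective_iff_has_inverse.mpr
    refine ⟨gleg maA.act ρHV.ρ F, fun t => ?_, fun t => ?_⟩
    · rw [← Module.End.mul_apply, ← ΦAVmul, hF.1, ΦAVone, Module.End.one_apply]
    · rw [← Module.End.mul_apply, ← ΦAVmul, hF.2.1, ΦAVone, Module.End.one_apply]
  refine ⟨hbijL, ?_⟩
  intro c x
  set e := LinearEquiv.ofBijective (resMul ιA.toLinearMap ιB.toLinearMap) hbij with he_def
  set eF := LinearEquiv.ofBijective (twistedMul maC Finv ∘ₗ
    TensorProduct.map ιA.toLinearMap ιB.toLinearMap) hbijF with heF_def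
  induction x using TensorProduct.induction_on with
  | zero => simp
  | add x₁ x₂ h₁ h₂ =>
    simp only [tmul_add, map_add] at h₁ h₂ ⊢
    rw [h₁, h₂]
  | tmul a v =>
    -- Twisted key lemma
    have hkeyF : inducedAction eF.symm.toLinearMap
        (eF.symm.toLinearMap ∘ₗ (twistedMul maC Finv ∘ₗ
          TensorProduct.map ιB.toLinearMap ιA.toLinearMap))
        (twistedMul maA Finv) (TensorProduct.lift ρB.ρ ∘ₗ legAct maB.act ρHV.ρ Finv)
        (c ⊗ₜ[k] (a ⊗ₜ[k] v)) =
        Pgen (TensorProduct.lift ρB.ρ ∘ₗ legAct maB.act ρHV.ρ Finv)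
          (eF.symm (twistedMul maC Finv (c ⊗ₜ[k] ιA.toLinearMap a)) ⊗ₜ[k] v) := by
      exact key_induced (twistedMul maC Finv) (twistedMul maA Finv)
        ιA.toLinearMap ιB.toLinearMap (TensorProduct.lift ρB.ρ ∘ₗ legAct maB.act ρHV.ρ Finv)
        _ _ rfl rfl hbijF (twisted_assoc maC hF)
        (fun a a' => by
          simp only [AlgHom.toLinearMap_apply]
          rw [twistedMul_eq_gleg, twistedMul_eq_gleg, iotaA_twisted maC maA ιA hAeq])
        c a v
    -- Untwisted key lemma
    have hkeyU : ∀ (c' : C) (a' : A) (v' : V),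
        inducedAction e.symm.toLinearMap
          (e.symm.toLinearMap ∘ₗ resMul ιB.toLinearMap ιA.toLinearMap)
          (LinearMap.mul' k A) (TensorProduct.lift ρB.ρ) (c' ⊗ₜ[k] (a' ⊗ₜ[k] v')) =
        Pgen (TensorProduct.lift ρB.ρ)
          (e.symm (LinearMap.mul' k C (c' ⊗ₜ[k] ιA.toLinearMap a')) ⊗ₜ[k] v') := by
      intro c' a' v'
      exact key_induced (LinearMap.mul' k C) (LinearMap.mul' k A)
        ιA.toLinearMap ιB.toLinearMap (TensorProduct.lift ρB.ρ)
        (resMul ιA.toLinearMap ιB.toLinearMap) (resMul ιB.toLinearMap ιA.toLinearMap)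
        rfl rfl hbij
        (fun x y z => by simp only [LinearMap.mul'_apply]; rw [mul_assoc])
        (fun a a' => by
          simp only [LinearMap.mul'_apply, AlgHom.toLinearMap_apply, ← map_mul])
        c' a' v'
    -- μ_F⁻¹ in terms of μ⁻¹
    have heFz : ∀ z : A ⊗[k] B, eF z =
        resMul ιA.toLinearMap ιB.toLinearMap (gleg maA.act maB.act Finv z) := by
      intro z
      have h0 : eF z = twistedMul maC Finv
          (TensorProduct.map ιA.toLinearMap ιB.toLinearMap z) := rfl
      rw [h0, twistedMul_eq_gleg, ← bridge maC maA maB ιA ιB hAeq hBeq]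
    have heF : ∀ w : C, eF.symm w = gleg maA.act maB.act F (e.symm w) := by
      intro w
      apply eF.injective
      rw [eF.apply_symm_apply, heFz, ← Module.End.mul_apply, ← ΦABmul, hF.2.1, ΦABone,
        Module.End.one_apply]
      exact (e.apply_symm_apply w).symm
    -- equivariance of μ⁻¹
    have hmuinv : ∀ (h' : H) (w : C), e.symm (maC.act h' w) =
        gleg maA.act maB.act (Coalgebra.comul h') (e.symm w) := by
      intro h' w
      apply e.injective
      rw [e.apply_symm_apply]
      rw [show e (gleg maA.act maB.act (Coalgebra.comul h') (e.symm w)) =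
        resMul ιA.toLinearMap ιB.toLinearMap
          (gleg maA.act maB.act (Coalgebra.comul h') (e.symm w)) from rfl]
      rw [← mu_equiv maC maA maB ιA ιB hAeq hBeq]
      rw [show resMul ιA.toLinearMap ιB.toLinearMap (e.symm w) = e (e.symm w) from rfl,
        e.apply_symm_apply]
    -- moving ιA through a legwise action
    have hKWgen : ∀ (W : H ⊗[k] H) (u : C ⊗[k] A),
        LinearMap.mul' k C (TensorProduct.map LinearMap.id ιA.toLinearMap
          (gleg maC.act maA.act W u)) =
        LinearMap.mul' k C (gleg maC.act maC.act W
          (TensorProduct.map LinearMap.id ιA.toLinearMap u)) := by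
      intro W u
      induction W using TensorProduct.induction_on with
      | zero => simp
      | add u' v' hu hv => simp only [map_add, LinearMap.add_apply] at hu hv ⊢; rw [hu, hv]
      | tmul h' g' =>
        induction u using TensorProduct.induction_on with
        | zero => simp
        | add u' v' hu hv => simp only [map_add, LinearMap.map_add] at hu hv ⊢; rw [hu, hv]
        | tmul c' a' =>
          simp only [gleg_tmul, TensorProduct.map_tmul, LinearMap.mul'_apply,
            AlgHom.toLinearMap_apply, LinearMap.id_coe, id_eq, hAeq]
    -- pointwise description of three-leg actions through `Pgen`
    have subP : ∀ (g' : H) (u2 : H ⊗[k] H) (a' : A) (b' : B) (w : V),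
        Pgen (TensorProduct.lift ρB.ρ) (gleg (gleg maA.act maB.act) ρHV.ρ
          ((TensorProduct.assoc k H H H).symm (g' ⊗ₜ[k] u2)) ((a' ⊗ₜ[k] b') ⊗ₜ[k] w)) =
        (maA.act g' a') ⊗ₜ[k]
          TensorProduct.lift ρB.ρ (gleg maB.act ρHV.ρ u2 (b' ⊗ₜ[k] w)) := by
      intro g' u2 a' b' w
      induction u2 using TensorProduct.induction_on with
      | zero => simp only [tmul_zero, map_zero, LinearMap.zero_apply]
      | add u' v' hu hv =>
        simp only [tmul_add, map_add, LinearMap.add_apply] at hu hv ⊢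
        rw [hu, hv]
      | tmul u w' =>
        simp only [TensorProduct.assoc_symm_tmul, gleg_tmul, TensorProduct.map_tmul,
          Pgen_tmul, lift.tmul]
    -- commuting `F⁻¹ ▷` past `Pgen`
    have hL2 : ∀ (D : H ⊗[k] H) (t : (A ⊗[k] B) ⊗[k] V),
        gleg maA.act ρHV.ρ D (Pgen (TensorProduct.lift ρB.ρ) t) =
          Pgen (TensorProduct.lift ρB.ρ) (gleg (gleg maA.act maB.act) ρHV.ρ
            ((TensorProduct.assoc k H H H).symm
              (TensorProduct.map LinearMap.id Coalgebra.comul D)) t) := by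
      intro D t
      induction t using TensorProduct.induction_on with
      | zero => simp only [map_zero]
      | add t₁ t₂ h₁ h₂ => simp only [map_add] at h₁ h₂ ⊢; rw [h₁, h₂]
      | tmul z w =>
        induction z using TensorProduct.induction_on with
        | zero => simp only [zero_tmul, map_zero]
        | add z₁ z₂ h₁ h₂ =>
          simp only [add_tmul, map_add] at h₁ h₂ ⊢; rw [h₁, h₂]
        | tmul a' b' =>
          induction D using TensorProduct.induction_on with
          | zero => simp only [map_zero, LinearMap.zero_apply]
          | add D₁ D₂ h₁ h₂ =>
            simp only [map_add, LinearMap.add_apply] at h₁ h₂ ⊢; rw [h₁, h₂]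
          | tmul g' g'' =>
            rw [show TensorProduct.map LinearMap.id (Coalgebra.comul (R := k))
              (g' ⊗ₜ[k] g'') = g' ⊗ₜ[k] (Coalgebra.comul g'') from by
                simp [TensorProduct.map_tmul]]
            rw [subP g' (Coalgebra.comul g'') a' b' w]
            rw [Pgen_tmul, gleg_tmul, TensorProduct.map_tmul, lift.tmul]
            rw [hHB g'' b' w, legAct_eq_gleg]
    -- absorbing the twisted `B`-action into a three-leg action
    have hL3 : ∀ (D : H ⊗[k] H) (z : A ⊗[k] B) (w : V),
        Pgen (TensorProduct.lift ρB.ρ ∘ₗ legAct maB.act ρHV.ρ D) (z ⊗ₜ[k] w) =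
          Pgen (TensorProduct.lift ρB.ρ) (gleg (gleg maA.act maB.act) ρHV.ρ
            ((TensorProduct.assoc k H H H).symm ((1 : H) ⊗ₜ[k] D)) (z ⊗ₜ[k] w)) := by
      intro D z w
      induction z using TensorProduct.induction_on with
      | zero => simp only [zero_tmul, map_zero]
      | add z₁ z₂ h₁ h₂ =>
        simp only [add_tmul, map_add] at h₁ h₂ ⊢; rw [h₁, h₂]
      | tmul a' b' =>
        rw [subP (1 : H) D a' b' w, maA.act_one, Module.End.one_apply]
        rw [Pgen_tmul, LinearMap.comp_apply, legAct_eq_gleg]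
    -- a three-leg action with trivial third leg
    have hF1 : ∀ (D : H ⊗[k] H) (z : A ⊗[k] B) (w : V),
        gleg (gleg maA.act maB.act) ρHV.ρ (D ⊗ₜ[k] (1 : H)) (z ⊗ₜ[k] w) =
          (gleg maA.act maB.act D z) ⊗ₜ[k] w := by
      intro D z w
      rw [gleg_tmul, ρHV.ρ_one, TensorProduct.map_tmul, Module.End.one_apply]
    -- the cocycle computation in (H⊗H)⊗H
    have helem : ((TensorProduct.assoc k H H H).symm
          (TensorProduct.map LinearMap.id Coalgebra.comul Finv)) *
        (((TensorProduct.assoc k H H H).symm ((1 : H) ⊗ₜ[k] Finv)) * (F ⊗ₜ[k] (1 : H))) =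
        TensorProduct.map Coalgebra.comul LinearMap.id Finv := by
      rw [← mul_assoc, ← assoc_symm_mul, ← cocycle_inv hF, mul_assoc,
        Algebra.TensorProduct.tmul_mul_tmul, hF.2.1, one_mul, ← Algebra.TensorProduct.one_def,
        mul_one]
    -- the outer twist of the right-hand side as a bilinear expression
    have hR1 : ∀ (D' D : H ⊗[k] H),
        gleg maC.act (diagAct maA.act ρHV.ρ) D'
            (c ⊗ₜ[k] gleg maA.act ρHV.ρ D (a ⊗ₜ[k] v)) =
          TensorProduct.map (maC.act.flip c) ((gleg maA.act ρHV.ρ).flip (a ⊗ₜ[k] v))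
            ((TensorProduct.map LinearMap.id Coalgebra.comul D') * ((1 : H) ⊗ₜ[k] D)) := by
      intro D' D
      induction D' using TensorProduct.induction_on with
      | zero => simp only [map_zero, LinearMap.zero_apply, zero_mul]
      | add u w hu hw =>
        simp only [map_add, LinearMap.add_apply, add_mul] at hu hw ⊢; rw [hu, hw]
      | tmul f' f'' =>
        rw [show (TensorProduct.map LinearMap.id (Coalgebra.comul (R := k)) (f' ⊗ₜ[k] f'')) *
            ((1 : H) ⊗ₜ[k] D) = f' ⊗ₜ[k] ((Coalgebra.comul f'') * D) from by
          simp only [TensorProduct.map_tmul, LinearMap.id_coe, id_eq,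
            Algebra.TensorProduct.tmul_mul_tmul, mul_one, one_mul]]
        simp only [gleg_tmul, TensorProduct.map_tmul, diagAct_eq_gleg, LinearMap.flip_apply]
        rw [← Module.End.mul_apply, ← ΦAVmul]
    -- induced action on the image of `Rhat ∘ assoc`
    have hR3a : ∀ (W : H ⊗[k] H) (g'' : H),
        inducedAction e.symm.toLinearMap
          (e.symm.toLinearMap ∘ₗ resMul ιB.toLinearMap ιA.toLinearMap)
          (LinearMap.mul' k A) (TensorProduct.lift ρB.ρ)
          (TensorProduct.map (maC.act.flip c) ((gleg maA.act ρHV.ρ).flip (a ⊗ₜ[k] v))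
            (TensorProduct.assoc k H H H (W ⊗ₜ[k] g''))) =
        Pgen (TensorProduct.lift ρB.ρ) (e.symm (LinearMap.mul' k C
          (TensorProduct.map LinearMap.id ιA.toLinearMap
            (gleg maC.act maA.act W (c ⊗ₜ[k] a)))) ⊗ₜ[k] (ρHV.ρ g'' v)) := by
      intro W g''
      induction W using TensorProduct.induction_on with
      | zero => simp only [zero_tmul, map_zero, LinearMap.zero_apply]
      | add u w hu hw =>
        simp only [add_tmul, map_add, LinearMap.add_apply] at hu hw ⊢; rw [hu, hw]
      | tmul h' g =>
        rw [TensorProduct.assoc_tmul]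
        simp only [TensorProduct.map_tmul, LinearMap.flip_apply, gleg_tmul]
        rw [hkeyU (maC.act h' c) (maA.act g a) (ρHV.ρ g'' v)]
        simp only [gleg_tmul, TensorProduct.map_tmul, LinearMap.id_coe, id_eq,
          AlgHom.toLinearMap_apply]
    -- the full right-hand side computation
    have hR3 : ∀ (D' D : H ⊗[k] H),
        inducedAction e.symm.toLinearMap
          (e.symm.toLinearMap ∘ₗ resMul ιB.toLinearMap ιA.toLinearMap)
          (LinearMap.mul' k A) (TensorProduct.lift ρB.ρ)
          (TensorProduct.map (maC.act.flip c) ((gleg maA.act ρHV.ρ).flip (a ⊗ₜ[k] v))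
            (TensorProduct.assoc k H H H
              ((TensorProduct.map Coalgebra.comul LinearMap.id D') * (D ⊗ₜ[k] (1 : H))))) =
        Pgen (TensorProduct.lift ρB.ρ) (gleg (gleg maA.act maB.act) ρHV.ρ
          (TensorProduct.map Coalgebra.comul LinearMap.id D')
          (e.symm (LinearMap.mul' k C (TensorProduct.map LinearMap.id ιA.toLinearMap
            (gleg maC.act maA.act D (c ⊗ₜ[k] a)))) ⊗ₜ[k] v)) := by
      intro D' D
      induction D' using TensorProduct.induction_on with
      | zero => simp only [map_zero, zero_mul, LinearMap.zero_apply]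
      | add u w hu hw =>
        simp only [map_add, add_mul, LinearMap.add_apply] at hu hw ⊢; rw [hu, hw]
      | tmul e' e'' =>
        rw [show (TensorProduct.map (Coalgebra.comul (R := k)) LinearMap.id (e' ⊗ₜ[k] e'')) *
            (D ⊗ₜ[k] (1 : H)) = ((Coalgebra.comul e') * D) ⊗ₜ[k] e'' from by
          simp only [TensorProduct.map_tmul, LinearMap.id_coe, id_eq,
            Algebra.TensorProduct.tmul_mul_tmul, mul_one]]
        rw [hR3a ((Coalgebra.comul e') * D) e'']
        rw [ΦCAmul, Module.End.mul_apply, hKWgen, act_mul'_comul maC, hmuinv]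
        simp only [TensorProduct.map_tmul, LinearMap.id_coe, id_eq, gleg_tmul]
    -- Assemble everything
    rw [hkeyF, heF]
    rw [hL3 Finv (gleg maA.act maB.act F
      (e.symm (twistedMul maC Finv (c ⊗ₜ[k] ιA.toLinearMap a)))) v]
    rw [← hF1 F (e.symm (twistedMul maC Finv (c ⊗ₜ[k] ιA.toLinearMap a))) v]
    rw [legAct_eq_gleg maA.act ρHV.ρ Finv, legAct_eq_gleg maC.act (diagAct maA.act ρHV.ρ) Finv]
    rw [hL2 Finv]
    rw [← Module.End.mul_apply, ← G3mul, ← Module.End.mul_apply, ← G3mul]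
    rw [mul_assoc, helem]
    rw [hR1 Finv Finv]
    rw [show (TensorProduct.map LinearMap.id (Coalgebra.comul (R := k)) Finv) *
        ((1 : H) ⊗ₜ[k] Finv) = TensorProduct.assoc k H H H
          ((TensorProduct.map Coalgebra.comul LinearMap.id Finv) * (Finv ⊗ₜ[k] (1 : H)))
        from by rw [cocycle_inv hF, LinearEquiv.apply_symm_apply]]
    rw [hR3 Finv Finv]
    rw [hKWgen Finv (c ⊗ₜ[k] a)]
    rw [twistedMul_eq_gleg]
    simp only [TensorProduct.map_tmul, LinearMap.id_coe, id_eq, AlgHom.toLinearMap_apply]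

end
end

section
/- For n ≥ 1 and m even, the ideal I_G of the commutative polynomial algebra S(V) = k[x₁,…,xₙ] generated by p_k = Σᵢ xᵢ^{km} (k = 1,…,n−1) and r = (x₁⋯xₙ)^{m/p}, and the ideal I_W of the skew-polynomial algebra S₋₁(V) (with relations xᵢxⱼ = −xⱼxᵢ for i ≠ j) generated by the same elements, have the same underlying subspace of the vector space S spanned by standard monomials x₁^{k₁}⋯xₙ^{kₙ}. -/
open MvPolynomial TensorProduct

noncomputable section

variable (k : Type) [Field k] (n : ℕ)

/-- The sign `(−1)^{Σ_{i>j} αᵢ βⱼ}` governing the skew-commutative product. -/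
def skewSign (α β : Fin n →₀ ℕ) : k :=
  (-1 : k) ^ (∑ i : Fin n, ∑ j : Fin n, if j < i then α i * β j else 0)

/-- The skew-polynomial multiplication on the vector space of polynomials,
determined on standard monomials by `X^α ⋆ X^β = (−1)^{Σ_{i>j} αᵢ βⱼ} X^{α+β}`;
this realises `S₋₁(V)`, with `xᵢ xⱼ = −xⱼ xᵢ` for `i ≠ j`, on the common underlying
vector space of `S(V)` and `S₋₁(V)`. -/
def skewMul : MvPolynomial (Fin n) k →ₗ[k] MvPolynomial (Fin n) k →ₗ[k] MvPolynomial (Fin n) k :=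
  (MvPolynomial.basisMonomials (Fin n) k).constr k fun α =>
    (MvPolynomial.basisMonomials (Fin n) k).constr k fun β =>
      skewSign k n α β • monomial (α + β) (1 : k)

/-- The generators `p_l = Σᵢ xᵢ^{lm}` for `l = 1, …, n−1` together with
`r = (x₁ ⋯ xₙ)^{m/p}`. -/
def invGens (m p : ℕ) : Set (MvPolynomial (Fin n) k) :=
  (Set.range fun l : Fin (n - 1) => ∑ i : Fin n, (X i : MvPolynomial (Fin n) k) ^ ((l.val + 1) * m))
    ∪ {∏ i : Fin n, (X i : MvPolynomial (Fin n) k) ^ (m / p)}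

/-- The two-sided ideal of the skew-polynomial algebra `S₋₁(V)` generated by a set `gens`:
the smallest subspace containing `gens` and stable under left and right skew multiplication. -/
def skewIdeal (gens : Set (MvPolynomial (Fin n) k)) : Submodule k (MvPolynomial (Fin n) k) :=
  sInf {J : Submodule k (MvPolynomial (Fin n) k) | gens ⊆ J ∧
    ∀ x ∈ J, ∀ r : MvPolynomial (Fin n) k, skewMul k n r x ∈ J ∧ skewMul k n x r ∈ J}

variable {k n}

lemma skewMul_monomial (α β : Fin n →₀ ℕ) :
    skewMul k n (monomial α 1) (monomial β 1) = skewSign k n α β • monomial (α + β) (1 : k) := by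
  have h : ∀ γ : Fin n →₀ ℕ, (monomial γ (1:k)) = (MvPolynomial.basisMonomials (Fin n) k) γ := by
    intro γ; rw [coe_basisMonomials]
  rw [h α, h β, skewMul, Module.Basis.constr_basis, Module.Basis.constr_basis]

lemma skewSign_add_right (α β γ : Fin n →₀ ℕ) :
    skewSign k n α (β + γ) = skewSign k n α β * skewSign k n α γ := by
  rw [skewSign, skewSign, skewSign, ← pow_add]
  congr 1
  rw [← Finset.sum_add_distrib]
  refine Finset.sum_congr rfl fun i _ => ?_
  rw [← Finset.sum_add_distrib]
  refine Finset.sum_congr rfl fun j _ => ?_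
  by_cases h : j < i <;> simp [h, mul_add]

lemma skewSign_add_left (α β γ : Fin n →₀ ℕ) :
    skewSign k n (α + β) γ = skewSign k n α γ * skewSign k n β γ := by
  rw [skewSign, skewSign, skewSign, ← pow_add]
  congr 1
  rw [← Finset.sum_add_distrib]
  refine Finset.sum_congr rfl fun i _ => ?_
  rw [← Finset.sum_add_distrib]
  refine Finset.sum_congr rfl fun j _ => ?_
  by_cases h : j < i <;> simp [h, add_mul]

lemma skewSign_single_right (α : Fin n →₀ ℕ) (i : Fin n) {e : ℕ} (he : Even e) :
    skewSign k n α (Finsupp.single i e) = 1 := by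
  rw [skewSign]
  apply Even.neg_one_pow
  apply Finset.even_sum
  intro i' _
  apply Finset.even_sum
  intro j _
  split
  · rcases eq_or_ne j i with rfl | hj
    · simp only [Finsupp.single_eq_same]; exact he.mul_left _
    · simp [Finsupp.single_eq_of_ne' (Ne.symm hj)]
  · exact Even.zero

lemma skewSign_single_left (β : Fin n →₀ ℕ) (i : Fin n) {e : ℕ} (he : Even e) :
    skewSign k n (Finsupp.single i e) β = 1 := by
  rw [skewSign]
  apply Even.neg_one_pow
  apply Finset.even_sum
  intro i' _
  apply Finset.even_sum
  intro j _
  split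
  · rcases eq_or_ne i' i with rfl | hj
    · simp only [Finsupp.single_eq_same]; exact (he.mul_right _)
    · simp [Finsupp.single_eq_of_ne' (Ne.symm hj)]
  · exact Even.zero

lemma skewSign_mul_self (α β : Fin n →₀ ℕ) :
    skewSign k n α β * skewSign k n α β = 1 := by
  rw [skewSign, ← pow_add, ← two_mul]
  exact Even.neg_one_pow (even_two_mul _)

lemma skewSign_zero_right (α : Fin n →₀ ℕ) : skewSign k n α 0 = (1 : k) := by
  simp [skewSign]

lemma prod_X_pow_finset (e : ℕ) (s : Finset (Fin n)) :
    ∏ i ∈ s, (X i : MvPolynomial (Fin n) k) ^ e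
      = monomial (∑ i ∈ s, Finsupp.single i e) (1 : k) := by
  classical
  induction s using Finset.induction with
  | empty => simp
  | @insert a s ha ih =>
      rw [Finset.prod_insert ha, Finset.sum_insert ha, ih, X_pow_eq_monomial,
        monomial_mul, one_mul]

/-- Multiplying a monomial by a power sum. -/
lemma monomial_mul_powerSum (α : Fin n →₀ ℕ) (e : ℕ) :
    monomial α (1:k) * (∑ i : Fin n, (X i : MvPolynomial (Fin n) k) ^ e)
      = ∑ i : Fin n, monomial (α + Finsupp.single i e) (1:k) := by
  rw [Finset.mul_sum]
  exact Finset.sum_congr rfl fun i _ => by rw [X_pow_eq_monomial, monomial_mul, one_mul]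

lemma skewMul_monomial_powerSum (β α : Fin n →₀ ℕ) {e : ℕ} (he : Even e) :
    skewMul k n (monomial β 1) (monomial α 1 * ∑ i : Fin n, (X i : MvPolynomial (Fin n) k) ^ e)
      = skewSign k n β α •
        (monomial (β + α) 1 * ∑ i : Fin n, (X i : MvPolynomial (Fin n) k) ^ e) := by
  rw [monomial_mul_powerSum, map_sum, monomial_mul_powerSum, Finset.smul_sum]
  refine Finset.sum_congr rfl fun i _ => ?_
  rw [skewMul_monomial, skewSign_add_right, skewSign_single_right _ _ he, mul_one,
    add_assoc]

lemma skewMul_powerSum_monomial (α β : Fin n →₀ ℕ) {e : ℕ} (he : Even e) :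
    skewMul k n (monomial α 1 * ∑ i : Fin n, (X i : MvPolynomial (Fin n) k) ^ e) (monomial β 1)
      = skewSign k n α β •
        (monomial (α + β) 1 * ∑ i : Fin n, (X i : MvPolynomial (Fin n) k) ^ e) := by
  rw [monomial_mul_powerSum, map_sum, LinearMap.sum_apply, monomial_mul_powerSum,
    Finset.smul_sum]
  refine Finset.sum_congr rfl fun i _ => ?_
  rw [skewMul_monomial, skewSign_add_left, skewSign_single_left _ _ he, mul_one,
    add_right_comm]

/-- A linear-map statement valid on monomials is valid everywhere. -/
lemma mem_of_monomials {J : Submodule k (MvPolynomial (Fin n) k)}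
    (L : MvPolynomial (Fin n) k →ₗ[k] MvPolynomial (Fin n) k)
    (h : ∀ α : Fin n →₀ ℕ, L (monomial α 1) ∈ J) (f : MvPolynomial (Fin n) k) : L f ∈ J := by
  have hle : Submodule.span k (Set.range (MvPolynomial.basisMonomials (Fin n) k))
      ≤ J.comap L := by
    refine Submodule.span_le.mpr ?_
    rintro _ ⟨α, rfl⟩
    have := h α
    simpa [coe_basisMonomials] using this
  rw [Module.Basis.span_eq] at hle
  exact hle (Submodule.mem_top)

lemma span_pred {J : Submodule k (MvPolynomial (Fin n) k)} {s : Set (MvPolynomial (Fin n) k)}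
    (L : MvPolynomial (Fin n) k →ₗ[k] MvPolynomial (Fin n) k)
    (h : ∀ x ∈ s, L x ∈ J) : ∀ x ∈ Submodule.span k s, L x ∈ J := fun x hx =>
  Submodule.span_le.mpr (fun y hy => show y ∈ J.comap L from h y hy) hx

/-- The commutative ideal, as a `k`-subspace, is spanned by monomial multiples of the
generators. -/
lemma restrict_span_eq (S : Set (MvPolynomial (Fin n) k)) :
    (Ideal.span S).restrictScalars k
      = Submodule.span k {x | ∃ α : Fin n →₀ ℕ, ∃ g ∈ S, x = monomial α 1 * g} := by
  set T := Submodule.span k {x | ∃ α : Fin n →₀ ℕ, ∃ g ∈ S, x = monomial α 1 * g} with hT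
  have hmulgen : ∀ (α : Fin n →₀ ℕ) (g), g ∈ S → ∀ c, c * (monomial α 1 * g) ∈ T := by
    intro α g hg c
    refine mem_of_monomials (LinearMap.mulRight k (monomial α 1 * g)) (fun β => ?_) c
    rw [LinearMap.mulRight_apply, ← mul_assoc, monomial_mul, one_mul]
    exact Submodule.subset_span ⟨β + α, g, hg, rfl⟩
  have hmul : ∀ c, ∀ x ∈ T, c * x ∈ T := by
    intro c
    refine span_pred (LinearMap.mulLeft k c) ?_
    rintro x ⟨α, g, hg, rfl⟩
    exact hmulgen α g hg c
  refine le_antisymm ?_ ?_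
  · let I : Ideal (MvPolynomial (Fin n) k) :=
      { carrier := T
        add_mem' := fun ha hb => T.add_mem ha hb
        zero_mem' := T.zero_mem
        smul_mem' := fun c x hx => by simpa [smul_eq_mul] using hmul c x hx }
    have hle : Ideal.span S ≤ I := by
      refine Ideal.span_le.mpr fun g hg => ?_
      show g ∈ T
      have : monomial (0 : Fin n →₀ ℕ) (1:k) * g = g := by
        rw [monomial_zero', C_1, one_mul]
      exact this ▸ Submodule.subset_span ⟨0, g, hg, rfl⟩
    intro x hx
    exact hle hx
  · refine Submodule.span_le.mpr ?_
    rintro x ⟨α, g, hg, rfl⟩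
    exact Ideal.mul_mem_left _ _ (Ideal.subset_span hg)

variable (k n)

/-- For `m` even, the ideal `I_G` of the commutative polynomial algebra generated by the
`p_l` and `r`, and the ideal `I_W` of the skew-polynomial algebra generated by the same
elements, have the same underlying subspace. -/
theorem comm_ideal_eq_skew_ideal (m p : ℕ) (hm : Even m) (hp : p ∣ m) (hp0 : 0 < p)
    (hn : 1 ≤ n) :
    (Ideal.span (invGens k n m p)).restrictScalars k = skewIdeal k n (invGens k n m p) := by
  classical
  set S := invGens k n m p with hS
  set J := (Ideal.span S).restrictScalars k with hJ
  set γ : Fin n →₀ ℕ := ∑ i : Fin n, Finsupp.single i (m / p) with hγ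
  have hr : (∏ i : Fin n, (X i : MvPolynomial (Fin n) k) ^ (m / p)) = monomial γ 1 :=
    prod_X_pow_finset _ _
  have hrS : monomial γ (1:k) ∈ S := by
    rw [← hr]; exact Set.mem_union_right _ rfl
  have hpS : ∀ l : Fin (n-1),
      (∑ i : Fin n, (X i : MvPolynomial (Fin n) k) ^ ((l.val + 1) * m)) ∈ S := fun l =>
    Set.mem_union_left _ ⟨l, rfl⟩
  have heven : ∀ l : Fin (n-1), Even ((l.val + 1) * m) := fun l => hm.mul_left _
  have hmonr : ∀ δ : Fin n →₀ ℕ, monomial (δ + γ) (1:k) ∈ J := by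
    intro δ
    have h1 := Ideal.mul_mem_left (Ideal.span S) (monomial δ 1) (Ideal.subset_span hrS)
    rw [monomial_mul, one_mul] at h1
    simpa [hJ] using h1
  have hmonp : ∀ (δ : Fin n →₀ ℕ) (l : Fin (n-1)),
      monomial δ (1:k) * (∑ i : Fin n, (X i : MvPolynomial (Fin n) k) ^ ((l.val + 1) * m)) ∈ J := by
    intro δ l
    have h1 := Ideal.mul_mem_left (Ideal.span S) (monomial δ 1) (Ideal.subset_span (hpS l))
    simpa [hJ] using h1
  have hgen : ∀ g ∈ S, g ∈ skewIdeal k n S := fun g hg =>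
    Submodule.mem_sInf.mpr fun I hI => hI.1 hg
  have hclosed : ∀ x ∈ skewIdeal k n S, ∀ f,
      skewMul k n f x ∈ skewIdeal k n S ∧ skewMul k n x f ∈ skewIdeal k n S := by
    intro x hx f
    constructor
    · exact Submodule.mem_sInf.mpr fun I hI => (hI.2 x (Submodule.mem_sInf.mp hx I hI) f).1
    · exact Submodule.mem_sInf.mpr fun I hI => (hI.2 x (Submodule.mem_sInf.mp hx I hI) f).2
  refine le_antisymm ?_ ?_
  · -- commutative ideal ≤ skew ideal
    rw [hJ, restrict_span_eq]
    refine Submodule.span_le.mpr ?_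
    rintro x ⟨α, g, hg, rfl⟩
    rcases hg with ⟨l, rfl⟩ | hg
    · -- power sum generator
      show monomial α 1 * (∑ i : Fin n, (X i : MvPolynomial (Fin n) k) ^ ((l.val + 1) * m))
        ∈ skewIdeal k n S
      have key := skewMul_monomial_powerSum (k := k) α 0 (heven l)
      rw [skewSign_zero_right, one_smul, add_zero, monomial_zero', C_1, one_mul] at key
      rw [← key]
      exact (hclosed _ (hgen _ (hpS l)) _).1
    · -- the monomial generator r
      rw [Set.mem_singleton_iff] at hg
      subst hg
      show monomial α 1 * (∏ i : Fin n, (X i : MvPolynomial (Fin n) k) ^ (m / p))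
        ∈ skewIdeal k n S
      rw [hr, monomial_mul, one_mul]
      have h1 : monomial (α + γ) (1:k)
          = skewSign k n α γ • skewMul k n (monomial α 1) (monomial γ 1) := by
        rw [skewMul_monomial, smul_smul, skewSign_mul_self, one_smul]
      rw [h1]
      exact Submodule.smul_mem _ _ ((hclosed _ (hgen _ hrS) _).1)
  · -- skew ideal ≤ commutative ideal
    refine sInf_le ⟨fun g hg => by simpa [hJ] using Ideal.subset_span hg, ?_⟩
    intro x hx f
    rw [hJ, restrict_span_eq] at hx
    have key : ∀ (α : Fin n →₀ ℕ) (g), g ∈ S → ∀ β : Fin n →₀ ℕ,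
        skewMul k n (monomial β 1) (monomial α 1 * g) ∈ J ∧
        skewMul k n (monomial α 1 * g) (monomial β 1) ∈ J := by
      intro α g hg β
      rcases hg with ⟨l, rfl⟩ | hg
      · constructor
        · rw [show ((fun l : Fin (n-1) => ∑ i : Fin n,
              (X i : MvPolynomial (Fin n) k) ^ ((l.val + 1) * m)) l)
            = ∑ i : Fin n, (X i : MvPolynomial (Fin n) k) ^ ((l.val + 1) * m) from rfl,
            skewMul_monomial_powerSum β α (heven l)]
          exact Submodule.smul_mem _ _ (hmonp _ l)
        · rw [show ((fun l : Fin (n-1) => ∑ i : Fin n,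
              (X i : MvPolynomial (Fin n) k) ^ ((l.val + 1) * m)) l)
            = ∑ i : Fin n, (X i : MvPolynomial (Fin n) k) ^ ((l.val + 1) * m) from rfl,
            skewMul_powerSum_monomial α β (heven l)]
          exact Submodule.smul_mem _ _ (hmonp _ l)
      · rw [Set.mem_singleton_iff] at hg
        subst hg
        rw [hr, monomial_mul, one_mul]
        constructor
        · rw [skewMul_monomial]
          refine Submodule.smul_mem _ _ ?_
          rw [← add_assoc]
          exact hmonr (β + α)
        · rw [skewMul_monomial]
          refine Submodule.smul_mem _ _ ?_
          rw [add_right_comm]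
          exact hmonr (α + β)
    constructor
    · refine span_pred (skewMul k n f) (fun y hy => ?_) x hx
      obtain ⟨α, g, hg, rfl⟩ := hy
      exact mem_of_monomials ((skewMul k n).flip (monomial α 1 * g))
        (fun β => (key α g hg β).1) f
    · refine span_pred ((skewMul k n).flip f) (fun y hy => ?_) x hx
      obtain ⟨α, g, hg, rfl⟩ := hy
      exact mem_of_monomials (skewMul k n (monomial α 1 * g))
        (fun β => (key α g hg β).2) f
end
end

section
/- With A as above and c = 1, the centre of A is exactly the 2-dimensional span of 1 and z = xy − s. In particular, the centre of A contains no element of multiplicative order 4 over ℚ (every central unit squared is a nonnegative rational multiple of 1 plus z-component with z² = 1; concretely, (α + βz)² = (α² + β²)·1 + 2αβ·z, so no central element w satisfies w² = −1). -/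
open FreeAlgebra

/-- Generators of the presented algebra: `0 ↦ y`, `1 ↦ s`, `2 ↦ x`. -/
noncomputable abbrev RRCAgen : Fin 3 → FreeAlgebra ℚ (Fin 3) := FreeAlgebra.ι ℚ

/-- The defining relations of the 8-dimensional algebra `H̄₁(G(2,1,1))`:
`s² = 1, sx = −xs, ys = −sy, yx = xy − 2s, x² = 0, y² = 0`. -/
inductive RRCArel : FreeAlgebra ℚ (Fin 3) → FreeAlgebra ℚ (Fin 3) → Prop
  | s_sq : RRCArel (RRCAgen 1 * RRCAgen 1) 1
  | sx : RRCArel (RRCAgen 1 * RRCAgen 2) (-(RRCAgen 2 * RRCAgen 1))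
  | ys : RRCArel (RRCAgen 0 * RRCAgen 1) (-(RRCAgen 1 * RRCAgen 0))
  | yx : RRCArel (RRCAgen 0 * RRCAgen 2) (RRCAgen 2 * RRCAgen 0 - (2 : ℚ) • RRCAgen 1)
  | x_sq : RRCArel (RRCAgen 2 * RRCAgen 2) 0
  | y_sq : RRCArel (RRCAgen 0 * RRCAgen 0) 0

/-- The restricted rational Cherednik algebra `A = H̄₁(G(2,1,1))` over `ℚ`. -/
noncomputable abbrev RRCA := RingQuot RRCArel

/-- The central element `z = xy − s` of `A`. -/
noncomputable def RRCAz : RRCA :=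
  RingQuot.mkAlgHom ℚ RRCArel (RRCAgen 2 * RRCAgen 0 - RRCAgen 1)

-- concrete model
abbrev M2 := Matrix (Fin 2) (Fin 2) ℚ
abbrev B2 := M2 × M2

noncomputable def genImg : Fin 3 → B2 :=
  ![(!![0,0;2,0], !![0,0;(-2),0]), (!![1,0;0,-1], !![-1,0;0,1]), (!![0,1;0,0], !![0,1;0,0])]

noncomputable def phi : RRCA →ₐ[ℚ] B2 :=
  RingQuot.liftAlgHom ℚ ⟨FreeAlgebra.lift ℚ genImg, by
    intro a b h
    induction h <;> simp [genImg] <;>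
      first
      | rfl
      | (constructor <;> (ext i j <;> fin_cases i <;> fin_cases j <;> norm_num))
      | (ext i; fin_cases i <;> rfl)
      | (ext i j <;> fin_cases i <;> fin_cases j <;> norm_num)⟩

noncomputable abbrev Y : RRCA := RingQuot.mkAlgHom ℚ RRCArel (RRCAgen 0)
noncomputable abbrev S : RRCA := RingQuot.mkAlgHom ℚ RRCArel (RRCAgen 1)
noncomputable abbrev X : RRCA := RingQuot.mkAlgHom ℚ RRCArel (RRCAgen 2)

lemma rel_ss : S * S = 1 := by
  rw [← map_mul, ← map_one (RingQuot.mkAlgHom ℚ RRCArel)]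
  exact RingQuot.mkAlgHom_rel ℚ RRCArel.s_sq
lemma rel_sx : S * X = -(X * S) := by
  have := RingQuot.mkAlgHom_rel ℚ RRCArel.sx; simpa using this
lemma rel_ys : Y * S = -(S * Y) := by
  have := RingQuot.mkAlgHom_rel ℚ RRCArel.ys; simpa using this
lemma rel_yx : Y * X = X * Y - (2:ℚ) • S := by
  have := RingQuot.mkAlgHom_rel ℚ RRCArel.yx; simpa using this
lemma rel_xx : X * X = 0 := by
  have := RingQuot.mkAlgHom_rel ℚ RRCArel.x_sq; simpa using this
lemma rel_yy : Y * Y = 0 := by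
  have := RingQuot.mkAlgHom_rel ℚ RRCArel.y_sq; simpa using this

-- basis monomials
noncomputable def bas : Fin 8 → RRCA :=
  ![1, S, Y, Y*S, X, X*S, X*Y, X*Y*S]

-- the span
noncomputable def Sp : Submodule ℚ RRCA := Submodule.span ℚ (Set.range bas)

lemma bas_mem (i : Fin 8) : bas i ∈ Sp := Submodule.subset_span ⟨i, rfl⟩

lemma phi_Y : phi Y = (!![0,0;2,0], !![0,0;(-2),0]) := by
  simp [phi, Y, RingQuot.liftAlgHom_mkAlgHom_apply, genImg]
lemma phi_S : phi S = (!![1,0;0,-1], !![-1,0;0,1]) := by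
  simp [phi, S, RingQuot.liftAlgHom_mkAlgHom_apply, genImg]
lemma phi_X : phi X = (!![0,1;0,0], !![0,1;0,0]) := by
  simp [phi, X, RingQuot.liftAlgHom_mkAlgHom_apply, genImg]



section helpers
variable {R : Type} [Ring R] [Algebra ℚ R] {s x y : R}

lemma hsy (hys : y * s = -(s * y)) : s * y = -(y * s) := by rw [hys, neg_neg]
lemma h_sys (hss : s * s = 1) (hys : y * s = -(s * y)) : s * (y * s) = -y := by
  rw [← mul_assoc, hsy hys, neg_mul, mul_assoc, hss, mul_one]
lemma h_sxs (hss : s * s = 1) (hsx : s * x = -(x * s)) : s * (x * s) = -x := by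
  rw [← mul_assoc, hsx, neg_mul, mul_assoc, hss, mul_one]
lemma h_sxy (hsx : s * x = -(x * s)) (hys : y * s = -(s * y)) :
    s * (x * y) = x * y * s := by
  rw [← mul_assoc, hsx, neg_mul, mul_assoc, hsy hys, mul_neg, neg_neg, ← mul_assoc]
lemma h_sxys (hss : s * s = 1) (hsx : s * x = -(x * s)) (hys : y * s = -(s * y)) :
    s * (x * y * s) = x * y := by
  rw [mul_assoc x y s, ← mul_assoc, hsx, neg_mul, mul_assoc, h_sys hss hys, mul_neg, neg_neg]
lemma h_xys : x * (y * s) = x * y * s := (mul_assoc x y s).symm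
lemma h_xxs (hxx : x * x = 0) : x * (x * s) = 0 := by rw [← mul_assoc, hxx, zero_mul]
lemma h_xxy (hxx : x * x = 0) : x * (x * y) = 0 := by rw [← mul_assoc, hxx, zero_mul]
lemma h_xxys (hxx : x * x = 0) : x * (x * y * s) = 0 := by
  rw [← mul_assoc, ← mul_assoc, hxx, zero_mul, zero_mul]
lemma h_yys (hyy : y * y = 0) : y * (y * s) = 0 := by rw [← mul_assoc, hyy, zero_mul]
lemma h_yxs (hss : s * s = 1) (hyx : y * x = x * y - (2:ℚ) • s) :
    y * (x * s) = x * y * s - (2:ℚ) • 1 := by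
  rw [← mul_assoc, hyx, sub_mul, smul_mul_assoc, hss]
lemma h_yxy (hys : y * s = -(s * y)) (hyx : y * x = x * y - (2:ℚ) • s) (hyy : y * y = 0) :
    y * (x * y) = (2:ℚ) • (y * s) := by
  rw [← mul_assoc, hyx, sub_mul, mul_assoc, hyy, mul_zero, smul_mul_assoc,
    hsy hys, smul_neg, zero_sub, neg_neg]
lemma h_yxys (hss : s * s = 1) (hys : y * s = -(s * y)) (hyx : y * x = x * y - (2:ℚ) • s)
    (hyy : y * y = 0) : y * (x * y * s) = (2:ℚ) • y := by
  rw [mul_assoc x y s, ← mul_assoc, hyx, sub_mul, smul_mul_assoc, mul_assoc x y (y*s),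
    ← mul_assoc y y s, hyy, zero_mul, mul_zero, ← mul_assoc, hsy hys, neg_mul,
    mul_assoc, hss, mul_one, zero_sub, smul_neg, neg_neg]

end helpers

lemma bas0 : bas 0 = 1 := rfl
lemma bas1 : bas 1 = S := rfl
lemma bas2 : bas 2 = Y := rfl
lemma bas3 : bas 3 = Y * S := rfl
lemma bas4 : bas 4 = X := rfl
lemma bas5 : bas 5 = X * S := rfl
lemma bas6 : bas 6 = X * Y := rfl
lemma bas7 : bas 7 = X * Y * S := rfl

lemma gen_mul_mem (g : Fin 3) (i : Fin 8) :
    RingQuot.mkAlgHom ℚ RRCArel (RRCAgen g) * bas i ∈ Sp := by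
  fin_cases g <;> fin_cases i
  · show Y * bas 0 ∈ Sp; rw [bas0, mul_one]; exact bas_mem 2
  · show Y * bas 1 ∈ Sp; rw [bas1]; exact bas_mem 3
  · show Y * bas 2 ∈ Sp
    rw [bas2, rel_yy]; exact Sp.zero_mem
  · show Y * bas 3 ∈ Sp
    rw [bas3, h_yys rel_yy]; exact Sp.zero_mem
  · show Y * bas 4 ∈ Sp
    rw [bas4, rel_yx]; exact Sp.sub_mem (bas_mem 6) (Sp.smul_mem _ (bas_mem 1))
  · show Y * bas 5 ∈ Sp
    rw [bas5, h_yxs rel_ss rel_yx]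
    exact Sp.sub_mem (bas_mem 7) (Sp.smul_mem _ (bas_mem 0))
  · show Y * bas 6 ∈ Sp
    rw [bas6, h_yxy rel_ys rel_yx rel_yy]; exact Sp.smul_mem _ (bas_mem 3)
  · show Y * bas 7 ∈ Sp
    rw [bas7, h_yxys rel_ss rel_ys rel_yx rel_yy]; exact Sp.smul_mem _ (bas_mem 2)
  · show S * bas 0 ∈ Sp; rw [bas0, mul_one]; exact bas_mem 1
  · show S * bas 1 ∈ Sp; rw [bas1, rel_ss]; exact bas_mem 0
  · show S * bas 2 ∈ Sp
    rw [bas2, hsy rel_ys]; exact Sp.neg_mem (bas_mem 3)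
  · show S * bas 3 ∈ Sp
    rw [bas3, h_sys rel_ss rel_ys]; exact Sp.neg_mem (bas_mem 2)
  · show S * bas 4 ∈ Sp
    rw [bas4, rel_sx]; exact Sp.neg_mem (bas_mem 5)
  · show S * bas 5 ∈ Sp
    rw [bas5, h_sxs rel_ss rel_sx]; exact Sp.neg_mem (bas_mem 4)
  · show S * bas 6 ∈ Sp
    rw [bas6, h_sxy rel_sx rel_ys]; exact bas_mem 7
  · show S * bas 7 ∈ Sp
    rw [bas7, h_sxys rel_ss rel_sx rel_ys]; exact bas_mem 6
  · show X * bas 0 ∈ Sp; rw [bas0, mul_one]; exact bas_mem 4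
  · show X * bas 1 ∈ Sp; rw [bas1]; exact bas_mem 5
  · show X * bas 2 ∈ Sp; rw [bas2]; exact bas_mem 6
  · show X * bas 3 ∈ Sp; rw [bas3, h_xys]; exact bas_mem 7
  · show X * bas 4 ∈ Sp; rw [bas4, rel_xx]; exact Sp.zero_mem
  · show X * bas 5 ∈ Sp; rw [bas5, h_xxs rel_xx]; exact Sp.zero_mem
  · show X * bas 6 ∈ Sp; rw [bas6, h_xxy rel_xx]; exact Sp.zero_mem
  · show X * bas 7 ∈ Sp; rw [bas7, h_xxys rel_xx]; exact Sp.zero_mem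

lemma mul_mem_Sp (f : FreeAlgebra ℚ (Fin 3)) :
    ∀ b ∈ Sp, RingQuot.mkAlgHom ℚ RRCArel f * b ∈ Sp := by
  induction f using FreeAlgebra.induction with
  | grade0 r =>
      intro b hb
      have h1 : (RingQuot.mkAlgHom ℚ RRCArel) (algebraMap ℚ _ r) = algebraMap ℚ RRCA r :=
        AlgHom.commutes _ r
      rw [h1, ← Algebra.smul_def]
      exact Sp.smul_mem _ hb
  | grade1 g =>
      intro b hb
      induction hb using Submodule.span_induction with
      | mem u hu => obtain ⟨i, rfl⟩ := hu; exact gen_mul_mem g i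
      | zero => rw [mul_zero]; exact Sp.zero_mem
      | add u v _ _ hu hv => rw [mul_add]; exact Sp.add_mem hu hv
      | smul c u _ hu => rw [mul_smul_comm]; exact Sp.smul_mem _ hu
  | mul a b iha ihb =>
      intro c hc
      rw [map_mul, mul_assoc]
      exact iha _ (ihb _ hc)
  | add a b iha ihb =>
      intro c hc
      rw [map_add, add_mul]
      exact Sp.add_mem (iha _ hc) (ihb _ hc)

lemma mem_Sp (w : RRCA) : w ∈ Sp := by
  obtain ⟨f, rfl⟩ := RingQuot.mkAlgHom_surjective ℚ RRCArel w
  simpa using mul_mem_Sp f 1 (bas_mem 0)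

lemma pb0 : phi (bas 0) = (1, 1) := by rw [bas0, map_one]; rfl
lemma pb1 : phi (bas 1) = (!![1,0;0,-1], !![-1,0;0,1]) := by rw [bas1, phi_S]
lemma pb2 : phi (bas 2) = (!![0,0;2,0], !![0,0;-2,0]) := by rw [bas2, phi_Y]
lemma pb3 : phi (bas 3) = (!![0,0;2,0], !![0,0;2,0]) := by
  rw [bas3, map_mul, phi_Y, phi_S, Prod.mk_mul_mk]
  norm_num [Matrix.mul_fin_two]
  first
  | rfl
  | (constructor <;> (ext i j <;> fin_cases i <;> fin_cases j <;> norm_num))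
  | (ext i; fin_cases i <;> rfl)
  | (ext i j <;> fin_cases i <;> fin_cases j <;> norm_num)
lemma pb4 : phi (bas 4) = (!![0,1;0,0], !![0,1;0,0]) := by rw [bas4, phi_X]
lemma pb5 : phi (bas 5) = (!![0,-1;0,0], !![0,1;0,0]) := by
  rw [bas5, map_mul, phi_X, phi_S, Prod.mk_mul_mk]
  norm_num [Matrix.mul_fin_two]
  first
  | rfl
  | (constructor <;> (ext i j <;> fin_cases i <;> fin_cases j <;> norm_num))
  | (ext i; fin_cases i <;> rfl)
  | (ext i j <;> fin_cases i <;> fin_cases j <;> norm_num)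
lemma pb6 : phi (bas 6) = (!![2,0;0,0], !![-2,0;0,0]) := by
  rw [bas6, map_mul, phi_X, phi_Y, Prod.mk_mul_mk]
  norm_num [Matrix.mul_fin_two]
  first
  | rfl
  | (constructor <;> (ext i j <;> fin_cases i <;> fin_cases j <;> norm_num))
  | (ext i; fin_cases i <;> rfl)
  | (ext i j <;> fin_cases i <;> fin_cases j <;> norm_num)
lemma pb7 : phi (bas 7) = (!![2,0;0,0], !![2,0;0,0]) := by
  rw [bas7, map_mul, map_mul, phi_X, phi_Y, phi_S, Prod.mk_mul_mk, Prod.mk_mul_mk]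
  norm_num [Matrix.mul_fin_two]
  first
  | rfl
  | (constructor <;> (ext i j <;> fin_cases i <;> fin_cases j <;> norm_num))
  | (ext i; fin_cases i <;> rfl)
  | (ext i j <;> fin_cases i <;> fin_cases j <;> norm_num)

noncomputable def sig : B2 →ₗ[ℚ] RRCA where
  toFun p :=
    ((p.1 1 1 + p.2 1 1)/2) • bas 0 + ((p.2 1 1 - p.1 1 1)/2) • bas 1 +
    ((p.1 1 0 - p.2 1 0)/4) • bas 2 + ((p.1 1 0 + p.2 1 0)/4) • bas 3 +
    ((p.1 0 1 + p.2 0 1)/2) • bas 4 + ((p.2 0 1 - p.1 0 1)/2) • bas 5 +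
    ((p.1 0 0 - p.2 0 0 + p.1 1 1 - p.2 1 1)/4) • bas 6 +
    ((p.1 0 0 + p.2 0 0 - p.1 1 1 - p.2 1 1)/4) • bas 7
  map_add' p q := by
    simp only [Prod.fst_add, Prod.snd_add, Matrix.add_apply]
    module
  map_smul' c p := by
    simp only [Prod.smul_fst, Prod.smul_snd, Matrix.smul_apply, smul_eq_mul, RingHom.id_apply]
    module

lemma sig_phi_bas (i : Fin 8) : sig (phi (bas i)) = bas i := by
  fin_cases i
  · show sig (phi (bas 0)) = bas 0
    rw [pb0]; show _ = bas 0
    simp [sig, Matrix.one_apply]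
  · show sig (phi (bas 1)) = bas 1
    rw [pb1]; simp [sig]; try norm_num
  · show sig (phi (bas 2)) = bas 2
    rw [pb2]; simp [sig]; try norm_num
  · show sig (phi (bas 3)) = bas 3
    rw [pb3]; simp [sig]; try norm_num
  · show sig (phi (bas 4)) = bas 4
    rw [pb4]; simp [sig]; try norm_num
  · show sig (phi (bas 5)) = bas 5
    rw [pb5]; simp [sig]; try norm_num
  · show sig (phi (bas 6)) = bas 6
    rw [pb6]; simp [sig]; try norm_num
  · show sig (phi (bas 7)) = bas 7
    rw [pb7]; simp [sig]; try norm_num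

lemma sig_phi (w : RRCA) : sig (phi w) = w := by
  have hw := mem_Sp w
  induction hw using Submodule.span_induction with
  | mem u hu => obtain ⟨i, rfl⟩ := hu; exact sig_phi_bas i
  | zero => simp
  | add u v _ _ hu hv => rw [map_add, map_add, hu, hv]
  | smul c u _ hu => rw [map_smul, map_smul, hu]

lemma phi_inj : Function.Injective phi := by
  intro a b h
  rw [← sig_phi a, ← sig_phi b, h]

lemma z_eq : RRCAz = bas 6 - bas 1 := by
  rw [RRCAz, map_sub, map_mul]; rfl

lemma phi_z : phi RRCAz = (1, -1) := by
  rw [z_eq, map_sub, pb6, pb1]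
  refine Prod.ext ?_ ?_ <;>
    (show _ - _ = _) <;> ext i j <;> fin_cases i <;> fin_cases j <;>
    simp [Matrix.one_apply] <;> norm_num

lemma comm_scalar (c d : ℚ) (p : B2) :
    ((c • 1, d • (1:M2)) : B2) * p = p * (c • 1, d • 1) := by
  refine Prod.ext ?_ ?_ <;>
    simp [Prod.fst_mul, Prod.snd_mul, smul_mul_assoc, mul_smul_comm]

lemma central_of_phi_scalar (w : RRCA) (c d : ℚ) (hw : phi w = (c • 1, d • (1:M2))) :
    w ∈ Set.center RRCA := by
  rw [Semigroup.mem_center_iff]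
  intro g
  apply phi_inj
  rw [map_mul, map_mul, hw, comm_scalar]

lemma scalar_of_central (w : RRCA) (hw : w ∈ Set.center RRCA) :
    ∃ a b : ℚ, phi w = (a • 1, b • (1:M2)) := by
  rw [Semigroup.mem_center_iff] at hw
  have hX : phi X * phi w = phi w * phi X := by rw [← map_mul, ← map_mul, hw X]
  have hS : phi S * phi w = phi w * phi S := by rw [← map_mul, ← map_mul, hw S]
  rw [phi_X] at hX
  rw [phi_S] at hS
  have hX1 := congrArg Prod.fst hX
  have hX2 := congrArg Prod.snd hX
  have hS1 := congrArg Prod.fst hS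
  have hS2 := congrArg Prod.snd hS
  simp only [Prod.fst_mul, Prod.snd_mul] at hX1 hX2 hS1 hS2
  refine ⟨(phi w).1 0 0, (phi w).2 0 0, Prod.ext ?_ ?_⟩
  · have e01 := congrArg (fun m => m 0 1) hX1
    have e00 := congrArg (fun m => m 0 0) hX1
    have f01 := congrArg (fun m => m 0 1) hS1
    simp [Matrix.mul_apply, Fin.sum_univ_two] at e01 e00 f01
    ext i j
    fin_cases i <;> fin_cases j <;>
      simp [Matrix.smul_apply, Matrix.one_apply] <;>
      first | rfl | linarith [e01, e00, f01]
  · have e01 := congrArg (fun m => m 0 1) hX2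
    have e00 := congrArg (fun m => m 0 0) hX2
    have f01 := congrArg (fun m => m 0 1) hS2
    simp [Matrix.mul_apply, Fin.sum_univ_two] at e01 e00 f01
    ext i j
    fin_cases i <;> fin_cases j <;>
      simp [Matrix.smul_apply, Matrix.one_apply] <;>
      first | rfl | linarith [e01, e00, f01]

lemma phi_comb (α β : ℚ) :
    phi (algebraMap ℚ RRCA α + β • RRCAz) = ((α+β) • 1, (α-β) • (1:M2)) := by
  rw [map_add, map_smul, phi_z, AlgHom.commutes, Algebra.algebraMap_eq_smul_one]
  refine Prod.ext ?_ ?_ <;>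
    simp only [Prod.fst_add, Prod.snd_add, Prod.smul_fst, Prod.smul_snd, Prod.fst_one,
      Prod.snd_one, Prod.fst_neg, Prod.snd_neg, smul_neg] <;> module

lemma center_char (w : RRCA) :
    w ∈ Set.center RRCA ↔ ∃ α β : ℚ, w = algebraMap ℚ RRCA α + β • RRCAz := by
  constructor
  · intro hw
    obtain ⟨a, b, hab⟩ := scalar_of_central w hw
    refine ⟨(a+b)/2, (a-b)/2, phi_inj ?_⟩
    rw [phi_comb, hab]
    refine Prod.ext ?_ ?_ <;> simp <;> ring
  · rintro ⟨α, β, rfl⟩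
    exact central_of_phi_scalar _ (α+β) (α-β) (phi_comb α β)
lemma q4 (u : ℚ) (h : u^4 = 1) : u^2 = 1 := by
  have h0 : (u^2-1)*(u^2+1) = 0 := by linear_combination h
  rcases mul_eq_zero.mp h0 with h1|h1
  · linarith
  · nlinarith [sq_nonneg u]

lemma phi_sq (α β : ℚ) :
    phi ((algebraMap ℚ RRCA α + β • RRCAz)^2) = (((α+β)^2) • 1, ((α-β)^2) • (1:M2)) := by
  rw [map_pow, phi_comb]
  refine Prod.ext ?_ ?_ <;>
    simp [Prod.pow_fst, Prod.pow_snd, smul_pow]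

lemma phi_four (α β : ℚ) :
    phi ((algebraMap ℚ RRCA α + β • RRCAz)^4) = (((α+β)^4) • 1, ((α-β)^4) • (1:M2)) := by
  rw [map_pow, phi_comb]
  refine Prod.ext ?_ ?_ <;>
    simp [Prod.pow_fst, Prod.pow_snd, smul_pow]

/-- The centre of `A = H̄₁(G(2,1,1))` is exactly the span of `1` and `z = xy − s`;
in particular, the centre contains no element of multiplicative order 4:
no central `w` satisfies `w² = −1`, and every central `w` with `w⁴ = 1` has `w² = 1`. -/
theorem rrca_center :
    (∀ w : RRCA, w ∈ Set.center RRCA ↔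
      ∃ α β : ℚ, w = algebraMap ℚ RRCA α + β • RRCAz) ∧
    (∀ w ∈ Set.center RRCA, w ^ 2 ≠ -1) ∧
    (∀ w ∈ Set.center RRCA, w ^ 4 = 1 → w ^ 2 = 1) := by
  refine ⟨center_char, ?_, ?_⟩
  · intro w hw hc
    obtain ⟨α, β, rfl⟩ := (center_char w).mp hw
    have h1 := phi_sq α β
    rw [hc, map_neg, map_one] at h1
    have h2 := congrArg (fun p => p.1 0 0) h1
    simp [Matrix.smul_apply, Matrix.one_apply, Matrix.neg_apply] at h2
    nlinarith [sq_nonneg (α+β), h2]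
  · intro w hw hc
    obtain ⟨α, β, rfl⟩ := (center_char w).mp hw
    have h1 := phi_four α β
    rw [hc, map_one] at h1
    have hu := congrArg (fun p => p.1 0 0) h1
    have hv := congrArg (fun p => p.2 0 0) h1
    simp [Matrix.smul_apply, Matrix.one_apply, Prod.fst_one, Prod.snd_one] at hu hv
    apply phi_inj
    rw [phi_sq, map_one, q4 _ hu.symm, q4 _ hv.symm, one_smul]
    rfl
end
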